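/- arXiv:2508.01914 — 6 statements merged into one kernel-verified Lean document; each statement's English description precedes it below -/
import Mathlib

section
/- Let (Ω, 𝔽, ℙ) be a probability space, H a separable complex Hilbert space, and (Ψ_k)_{k∈ℕ} an i.i.d. sequence of strongly measurable random operators on H taking values in positive contractions, satisfying the coercivity condition 𝔼‖Ψ_k x‖² ≥ C‖x‖² for all x ∈ H with a constant 0 < C < 1. With R₀ = I and R_n = (I − Ψ_n)⋯(I − Ψ₁), one has for every x ∈ H and every n ≥ 0 the geometric decay 𝔼‖R_n x‖² ≤ (1 − C)^n ‖x‖². -/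
open MeasureTheory ProbabilityTheory Filter

/-- The σ-algebra on `B(H)` generated by the point evaluations `T ↦ T x`, i.e. the σ-algebra
corresponding to measurability in the strong operator sense. -/
noncomputable def strongMS (H : Type*) [NormedAddCommGroup H] [InnerProductSpace ℂ H] :
    MeasurableSpace (H →L[ℂ] H) :=
  ⨆ x : H, (borel H).comap fun T => T x

/-- The residual products `R₀ = I`, `R_n(ω) = (I - Ψ_n(ω))⋯(I - Ψ₁(ω))`.
Random operators are indexed starting from `1`, i.e. `Ψ 1, Ψ 2, …`. -/
noncomputable def residualProd {Ω H : Type*} [NormedAddCommGroup H] [InnerProductSpace ℂ H]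
    (Ψ : ℕ → Ω → (H →L[ℂ] H)) (ω : Ω) : ℕ → (H →L[ℂ] H)
  | 0 => 1
  | n + 1 => (1 - Ψ (n + 1) ω) * residualProd Ψ ω n

section Aux

variable {H : Type*} [NormedAddCommGroup H] [InnerProductSpace ℂ H]

/-- Apply the residual product built from the fixed sequence of operators `φ` to `x`. -/
noncomputable def resApply (φ : ℕ → (H →L[ℂ] H)) (x : H) : ℕ → H
  | 0 => x
  | n + 1 => (1 - φ (n + 1)) (resApply φ x n)

lemma residualProd_apply {Ω : Type*} (Ψ : ℕ → Ω → (H →L[ℂ] H)) (ω : Ω) (x : H) :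
    ∀ n, residualProd Ψ ω n x = resApply (fun k => Ψ k ω) x n
  | 0 => rfl
  | n + 1 => by
      rw [residualProd, ContinuousLinearMap.mul_apply, residualProd_apply Ψ ω x n, resApply]

lemma resApply_congr {φ ψ : ℕ → (H →L[ℂ] H)} {x : H} :
    ∀ {n : ℕ}, (∀ k ≤ n, φ k = ψ k) → resApply φ x n = resApply ψ x n
  | 0, _ => rfl
  | n + 1, h => by
      rw [resApply, resApply, h (n + 1) le_rfl,
        resApply_congr (fun k hk => h k (hk.trans (Nat.le_succ n)))]

variable [CompleteSpace H]

lemma aux_norm_le_one {T : H →L[ℂ] H} (h0 : 0 ≤ T) (h1 : T ≤ 1) : ‖T‖ ≤ 1 :=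
  (CStarAlgebra.norm_le_one_iff_of_nonneg T h0).mpr h1

lemma aux_one_sub_nonneg {T : H →L[ℂ] H} (h1 : T ≤ 1) : 0 ≤ 1 - T := by
  rw [ContinuousLinearMap.nonneg_iff_isPositive]
  simpa using (ContinuousLinearMap.le_def T 1).mp h1

lemma aux_one_sub_le_one {T : H →L[ℂ] H} (h0 : 0 ≤ T) : (1 - T : H →L[ℂ] H) ≤ 1 := by
  rw [ContinuousLinearMap.le_def]
  simpa using (ContinuousLinearMap.nonneg_iff_isPositive T).mp h0

lemma aux_norm_resApply_le {φ : ℕ → (H →L[ℂ] H)} (h0 : ∀ k, 0 ≤ φ k) (h1 : ∀ k, φ k ≤ 1)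
    (x : H) : ∀ n, ‖resApply φ x n‖ ≤ ‖x‖
  | 0 => le_rfl
  | n + 1 => by
      rw [resApply]
      calc ‖(1 - φ (n + 1)) (resApply φ x n)‖
          ≤ ‖(1 - φ (n + 1) : H →L[ℂ] H)‖ * ‖resApply φ x n‖ :=
            ContinuousLinearMap.le_opNorm _ _
        _ ≤ 1 * ‖x‖ := by
            apply mul_le_mul (aux_norm_le_one (aux_one_sub_nonneg (h1 _))
              (aux_one_sub_le_one (h0 _))) (aux_norm_resApply_le h0 h1 x n)
              (norm_nonneg _) zero_le_one
        _ = ‖x‖ := one_mul _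

/-- Key pointwise inequality: for a positive contraction `T`,
`‖(1 - T) y‖² + ‖T y‖² ≤ ‖y‖²`. -/
lemma aux_key_ineq {T : H →L[ℂ] H} (h0 : 0 ≤ T) (h1 : T ≤ 1) (y : H) :
    ‖(1 - T) y‖ ^ 2 + ‖T y‖ ^ 2 ≤ ‖y‖ ^ 2 := by
  have hsa : IsSelfAdjoint T :=
    ((ContinuousLinearMap.nonneg_iff_isPositive T).mp h0).isSelfAdjoint
  have hsq : T ^ 2 ≤ T := by
    simpa using CStarAlgebra.pow_antitone h0 h1 one_le_two
  have hp : (T - T ^ 2).IsPositive := (ContinuousLinearMap.le_def _ _).mp hsq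
  have hre : RCLike.re (inner ℂ ((T ^ 2) y) y) = ‖T y‖ ^ 2 := by
    have h2 : (T ^ 2) y = T (T y) := by
      rw [sq, ContinuousLinearMap.mul_apply]
    have h3 : (inner ℂ ((T ^ 2) y) y) = inner ℂ (T y) (T y) := by
      rw [h2]
      calc (inner ℂ (T (T y)) y) = inner ℂ ((ContinuousLinearMap.adjoint T) (T y)) y := by
            rw [hsa.adjoint_eq]
        _ = inner ℂ (T y) (T y) := ContinuousLinearMap.adjoint_inner_left T y (T y)
    rw [h3, inner_self_eq_norm_sq]
  have hTy : ‖T y‖ ^ 2 ≤ RCLike.re (inner ℂ (T y) y) := by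
    have := (RCLike.nonneg_iff.mp (hp.inner_nonneg_left y)).1
    rw [ContinuousLinearMap.sub_apply, inner_sub_left, map_sub] at this
    rw [← hre]
    linarith
  have hexp : ‖(1 - T) y‖ ^ 2
      = ‖y‖ ^ 2 - 2 * RCLike.re (inner ℂ y (T y)) + ‖T y‖ ^ 2 := by
    rw [ContinuousLinearMap.sub_apply, ContinuousLinearMap.one_apply]
    exact norm_sub_sq (𝕜 := ℂ) y (T y)
  have hsym : RCLike.re (inner ℂ y (T y)) = RCLike.re (inner ℂ (T y) y) :=
    inner_re_symm _ _
  rw [hexp, hsym]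
  linarith

variable [MeasurableSpace H] [BorelSpace H]

lemma aux_measurable_eval (y : H) : Measurable[strongMS H] (fun T : H →L[ℂ] H => T y) := by
  rw [measurable_iff_comap_le, strongMS, BorelSpace.measurable_eq (α := H)]
  exact le_iSup (fun z : H => (borel H).comap fun T : H →L[ℂ] H => T z) y

lemma aux_measurable_to_strongMS {α : Type*} {mα : MeasurableSpace α}
    {f : α → (H →L[ℂ] H)} (h : ∀ y, Measurable fun a => f a y) :
    Measurable[mα, strongMS H] f := by
  rw [measurable_iff_comap_le, strongMS, MeasurableSpace.comap_iSup]
  refine iSup_le fun y => ?_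
  rw [MeasurableSpace.comap_comp, ← BorelSpace.measurable_eq (α := H)]
  exact (h y).comap_le

variable [TopologicalSpace.SeparableSpace H]

lemma aux_measurable_apply2 :
    Measurable[(inferInstance : MeasurableSpace H).prod (strongMS H)]
      (fun p : H × (H →L[ℂ] H) => p.2 p.1) := by
  have : SecondCountableTopology H := UniformSpace.secondCountable_of_separable H
  exact measurable_uncurry_of_continuous_of_measurable
    (u := fun (y : H) (T : H →L[ℂ] H) => T y)
    (fun T => T.continuous) aux_measurable_eval

lemma aux_measurable_resApply (x : H) (n : ℕ) :
    Measurable[MeasurableSpace.pi (m := fun _ : ℕ => strongMS H)]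
      (fun φ : ℕ → (H →L[ℂ] H) => resApply φ x n) := by
  letI : MeasurableSpace (H →L[ℂ] H) := strongMS H
  induction n with
  | zero => exact measurable_const
  | succ n ih =>
      have hφ : Measurable[MeasurableSpace.pi (m := fun _ : ℕ => strongMS H), strongMS H]
          (fun φ : ℕ → (H →L[ℂ] H) => (1 - φ (n + 1) : H →L[ℂ] H)) := by
        apply aux_measurable_to_strongMS
        intro y
        have h1 : Measurable[MeasurableSpace.pi (m := fun _ : ℕ => strongMS H)]
            (fun φ : ℕ → (H →L[ℂ] H) => φ (n + 1) y) :=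
          (aux_measurable_eval y).comp (measurable_pi_apply (n + 1))
        have : (fun φ : ℕ → (H →L[ℂ] H) => (1 - φ (n + 1) : H →L[ℂ] H) y)
            = fun φ : ℕ → (H →L[ℂ] H) => y - φ (n + 1) y := by
          funext φ
          rw [ContinuousLinearMap.sub_apply, ContinuousLinearMap.one_apply]
        rw [this]
        exact ((continuous_const.sub continuous_id).measurable).comp h1
      exact aux_measurable_apply2.comp (ih.prodMk hφ)

lemma aux_integrable_of_bound {α : Type*} [MeasurableSpace α] (ν : MeasureTheory.Measure α)
    [MeasureTheory.IsFiniteMeasure ν] {M : ℝ} {g : α → ℝ} (hg : Measurable g)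
    (hb : ∀ a, |g a| ≤ M) : MeasureTheory.Integrable g ν :=
  (MeasureTheory.integrable_const M).mono' hg.aestronglyMeasurable
    (Filter.Eventually.of_forall fun a => by simpa [Real.norm_eq_abs] using hb a)

end Aux

/-- For an i.i.d. sequence `(Ψ_k)` of strongly measurable random positive
contractions on a separable complex Hilbert space `H` satisfying the coercivity condition
`𝔼‖Ψ_k x‖² ≥ C‖x‖²` with `0 < C < 1`, the residuals `R_n = (I - Ψ_n)⋯(I - Ψ₁)` satisfy the
geometric decay `𝔼‖R_n x‖² ≤ (1 - C)^n ‖x‖²` for every `x ∈ H` and `n ≥ 0`. -/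
theorem expectation_residualProd_geometric_decay
    {Ω : Type*} [MeasureSpace Ω] [IsProbabilityMeasure (ℙ : Measure Ω)]
    {H : Type*} [NormedAddCommGroup H] [InnerProductSpace ℂ H]
    [CompleteSpace H] [TopologicalSpace.SeparableSpace H]
    [MeasurableSpace H] [BorelSpace H]
    (Ψ : ℕ → Ω → (H →L[ℂ] H))
    (hmeas : ∀ k, ∀ x : H, Measurable fun ω => Ψ k ω x)
    (hpos : ∀ k ω, 0 ≤ Ψ k ω) (hcontr : ∀ k ω, Ψ k ω ≤ 1)
    (hindep : iIndepFun (m := fun _ : ℕ => strongMS H) Ψ (ℙ : Measure Ω))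
    (hident : ∀ i j : ℕ,
      @IdentDistrib Ω Ω (H →L[ℂ] H) _ _ (strongMS H) (Ψ i) (Ψ j) ℙ ℙ)
    (C : ℝ) (hC0 : 0 < C) (hC1 : C < 1)
    (hcoer : ∀ k, ∀ x : H, C * ‖x‖ ^ 2 ≤ ∫ ω : Ω, ‖Ψ k ω x‖ ^ 2 ∂(ℙ : Measure Ω))
    (x : H) (n : ℕ) :
    ∫ ω : Ω, ‖residualProd Ψ ω n x‖ ^ 2 ∂(ℙ : Measure Ω) ≤ (1 - C) ^ n * ‖x‖ ^ 2 := by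
  classical
  letI mB : MeasurableSpace (H →L[ℂ] H) := strongMS H
  induction n with
  | zero =>
      simp only [residualProd, ContinuousLinearMap.one_apply, pow_zero, one_mul,
        integral_const, measure_univ, ENNReal.toReal_one, probReal_univ, smul_eq_mul]
      exact le_rfl
  | succ n ih =>
      set μ : Measure Ω := (ℙ : Measure Ω) with hμ
      set X : Ω → (H →L[ℂ] H) := Ψ (n + 1) with hX
      set Y : Ω → H := fun ω => resApply (fun k => Ψ k ω) x n with hY
      have hfm : ∀ i, Measurable[_, strongMS H] (Ψ i) :=
        fun i => aux_measurable_to_strongMS (hmeas i)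
      have hXm : Measurable X := hfm (n + 1)
      have htuple : Measurable[_, MeasurableSpace.pi (m := fun _ : ℕ => strongMS H)]
          (fun ω (k : ℕ) => Ψ k ω) :=
        measurable_pi_lambda _ fun k => hfm k
      have hYm : Measurable Y := (aux_measurable_resApply x n).comp htuple
      have hYb : ∀ ω, ‖Y ω‖ ≤ ‖x‖ := fun ω =>
        aux_norm_resApply_le (fun k => hpos k ω) (fun k => hcontr k ω) x n
      have hXnorm : ∀ ω (y : H), ‖X ω y‖ ≤ ‖y‖ := fun ω y =>
        calc ‖X ω y‖ ≤ ‖X ω‖ * ‖y‖ := ContinuousLinearMap.le_opNorm _ _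
          _ ≤ 1 * ‖y‖ := mul_le_mul_of_nonneg_right
              (aux_norm_le_one (hpos (n + 1) ω) (hcontr (n + 1) ω)) (norm_nonneg _)
          _ = ‖y‖ := one_mul _
      -- independence of X and Y
      have hIndep : IndepFun X Y μ := by
        have hdisj : Disjoint ({n + 1} : Finset ℕ) (Finset.range (n + 1)) := by
          simp [Finset.disjoint_singleton_left]
        have h := hindep.indepFun_finset {n + 1} (Finset.range (n + 1)) hdisj hfm
        set ψg : ((Finset.range (n + 1) : Finset ℕ) → (H →L[ℂ] H)) → H :=
          fun v => resApply
            (fun k => if hk : k ∈ Finset.range (n + 1) then v ⟨k, hk⟩ else 1) x n with hψg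
        have hψgm : Measurable ψg := by
          apply (aux_measurable_resApply x n).comp
          apply measurable_pi_lambda
          intro k
          by_cases hk : k ∈ Finset.range (n + 1)
          · simpa [hk] using measurable_pi_apply (⟨k, hk⟩ : (Finset.range (n + 1) : Finset ℕ))
          · simpa [hk] using measurable_const
        have h2 := h.comp
          (φ := fun v : (({n + 1} : Finset ℕ) : Type) → (H →L[ℂ] H) =>
            v ⟨n + 1, Finset.mem_singleton_self _⟩)
          (ψ := ψg) (_mγ := mB) (measurable_pi_apply _) hψgm
        have he1 : ((fun v : (({n + 1} : Finset ℕ) : Type) → (H →L[ℂ] H) =>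
            v ⟨n + 1, Finset.mem_singleton_self _⟩) ∘
            (fun a (i : ({n + 1} : Finset ℕ)) => Ψ i a)) = X := rfl
        have he2 : (ψg ∘ (fun a (i : (Finset.range (n + 1) : Finset ℕ)) => Ψ i a)) = Y := by
          funext ω
          show ψg (fun i : (Finset.range (n + 1) : Finset ℕ) => Ψ i ω) = Y ω
          rw [hψg, hY]
          apply resApply_congr
          intro k hk
          have hk' : k ∈ Finset.range (n + 1) := Finset.mem_range.mpr (Nat.lt_succ_of_le hk)
          simp [hk']
        rwa [he1, he2] at h2
      have hmap : μ.map (fun ω => (X ω, Y ω)) = (μ.map X).prod (μ.map Y) :=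
        (indepFun_iff_map_prod_eq_prod_map_map hXm.aemeasurable hYm.aemeasurable).mp hIndep
      have hfmeas : Measurable (fun p : (H →L[ℂ] H) × H => ‖p.1 p.2‖ ^ 2) := by
        have h1 : Measurable (fun p : (H →L[ℂ] H) × H => p.1 p.2) :=
          (aux_measurable_apply2 (H := H)).comp measurable_swap
        exact ((continuous_norm.pow 2).measurable).comp h1
      have hF : Measurable (fun q : Ω × Ω => ‖X q.1 (Y q.2)‖ ^ 2) :=
        hfmeas.comp ((hXm.comp measurable_fst).prodMk (hYm.comp measurable_snd))
      have habs : ∀ (y : H), ‖y‖ ≤ ‖x‖ → |‖y‖ ^ 2| ≤ ‖x‖ ^ 2 := by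
        intro y hy
        rw [abs_of_nonneg (by positivity)]
        exact pow_le_pow_left₀ (norm_nonneg _) hy 2
      have hFint : Integrable (fun q : Ω × Ω => ‖X q.1 (Y q.2)‖ ^ 2) (μ.prod μ) :=
        aux_integrable_of_bound (μ.prod μ) hF fun q => habs _ ((hXnorm q.1 (Y q.2)).trans (hYb q.2))
      have hYsqint : Integrable (fun ω => ‖Y ω‖ ^ 2) μ :=
        aux_integrable_of_bound μ ((continuous_norm.pow 2).measurable.comp hYm) fun ω => habs _ (hYb ω)
      have hXYm : Measurable (fun ω => ‖X ω (Y ω)‖ ^ 2) :=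
        hfmeas.comp (hXm.prodMk hYm)
      have hXYsqint : Integrable (fun ω => ‖X ω (Y ω)‖ ^ 2) μ :=
        aux_integrable_of_bound μ hXYm fun ω => habs _ ((hXnorm ω (Y ω)).trans (hYb ω))
      -- Fubini / independence step
      have hXYint_eq : ∫ ω, ‖X ω (Y ω)‖ ^ 2 ∂μ
          = ∫ q : Ω × Ω, ‖X q.1 (Y q.2)‖ ^ 2 ∂(μ.prod μ) := by
        have h1 : ∫ ω, ‖X ω (Y ω)‖ ^ 2 ∂μ
            = ∫ p : (H →L[ℂ] H) × H, ‖p.1 p.2‖ ^ 2 ∂(μ.map fun ω => (X ω, Y ω)) :=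
          (integral_map (hXm.prodMk hYm).aemeasurable
            hfmeas.aestronglyMeasurable).symm
        rw [h1, hmap, Measure.map_prod_map _ _ hXm hYm,
          integral_map (hXm.prodMap hYm).aemeasurable hfmeas.aestronglyMeasurable]
        rfl
      have hlow : C * ∫ ω, ‖Y ω‖ ^ 2 ∂μ ≤ ∫ ω, ‖X ω (Y ω)‖ ^ 2 ∂μ := by
        rw [hXYint_eq, integral_prod_symm _ hFint]
        calc C * ∫ ω, ‖Y ω‖ ^ 2 ∂μ = ∫ ω₂, C * ‖Y ω₂‖ ^ 2 ∂μ := by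
              rw [integral_const_mul]
          _ ≤ ∫ ω₂, ∫ ω₁, ‖X ω₁ (Y ω₂)‖ ^ 2 ∂μ ∂μ := by
              apply integral_mono (hYsqint.const_mul C) hFint.integral_prod_right
              intro ω₂
              exact hcoer (n + 1) (Y ω₂)
      -- pointwise inequality
      have hpt : ∀ ω, ‖residualProd Ψ ω (n + 1) x‖ ^ 2 ≤ ‖Y ω‖ ^ 2 - ‖X ω (Y ω)‖ ^ 2 := by
        intro ω
        have hkey := aux_key_ineq (hpos (n + 1) ω) (hcontr (n + 1) ω) (Y ω)
        have hre : residualProd Ψ ω (n + 1) x = (1 - X ω) (Y ω) := by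
          rw [residualProd, ContinuousLinearMap.mul_apply, residualProd_apply]
        rw [hre]
        linarith
      have hRm : Measurable (fun ω => ‖residualProd Ψ ω (n + 1) x‖ ^ 2) := by
        have : (fun ω => ‖residualProd Ψ ω (n + 1) x‖ ^ 2)
            = fun ω => ‖resApply (fun k => Ψ k ω) x (n + 1)‖ ^ 2 := by
          funext ω; rw [residualProd_apply]
        rw [this]
        exact (continuous_norm.pow 2).measurable.comp
          ((aux_measurable_resApply x (n + 1)).comp htuple)
      have hRint : Integrable (fun ω => ‖residualProd Ψ ω (n + 1) x‖ ^ 2) μ := by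
        apply aux_integrable_of_bound μ hRm
        intro ω
        apply habs
        rw [residualProd_apply]
        exact aux_norm_resApply_le (fun k => hpos k ω) (fun k => hcontr k ω) x (n + 1)
      have hihY : ∫ ω, ‖Y ω‖ ^ 2 ∂μ ≤ (1 - C) ^ n * ‖x‖ ^ 2 := by
        have : (fun ω => ‖Y ω‖ ^ 2) = fun ω => ‖residualProd Ψ ω n x‖ ^ 2 := by
          funext ω; rw [hY]; rw [residualProd_apply]
        rw [this]
        exact ih
      calc ∫ ω, ‖residualProd Ψ ω (n + 1) x‖ ^ 2 ∂μ
          ≤ ∫ ω, (‖Y ω‖ ^ 2 - ‖X ω (Y ω)‖ ^ 2) ∂μ :=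
            integral_mono hRint (hYsqint.sub hXYsqint) hpt
        _ = (∫ ω, ‖Y ω‖ ^ 2 ∂μ) - ∫ ω, ‖X ω (Y ω)‖ ^ 2 ∂μ :=
            integral_sub hYsqint hXYsqint
        _ ≤ (∫ ω, ‖Y ω‖ ^ 2 ∂μ) - C * ∫ ω, ‖Y ω‖ ^ 2 ∂μ := by linarith
        _ = (1 - C) * ∫ ω, ‖Y ω‖ ^ 2 ∂μ := by ring
        _ ≤ (1 - C) * ((1 - C) ^ n * ‖x‖ ^ 2) :=
            mul_le_mul_of_nonneg_left hihY (by linarith)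
        _ = (1 - C) ^ (n + 1) * ‖x‖ ^ 2 := by ring
end

section
/- Let (Ω, 𝔽, ℙ) be a probability space, H a separable complex Hilbert space, and (Ψ_k)_{k∈ℕ} an i.i.d. sequence of strongly measurable random operators on H taking values in positive contractions, satisfying the coercivity condition 𝔼‖Ψ_k x‖² ≥ C‖x‖² for all x ∈ H with a constant 0 < C < 1. Then for every x ∈ H, lim_{n→∞} 𝔼‖ x − Σ_{k=1}^{n} Ψ_k (I − Ψ_{k−1})⋯(I − Ψ₁) x ‖² = 0; that is, the partial sums converge to x in L²(Ω, H). -/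
open MeasureTheory ProbabilityTheory Filter

section Aux
open ContinuousLinearMap RCLike

variable {H : Type*} [NormedAddCommGroup H] [InnerProductSpace ℂ H] [CompleteSpace H]

local notation "⟪" x ", " y "⟫" => @inner ℂ _ _ x y

lemma op_cs (T : H →L[ℂ] H) (hT : T.IsPositive) (v w : H) :
    (re ⟪T v, w⟫) ^ 2 ≤ re ⟪T v, v⟫ * re ⟪T w, w⟫ := by
  have hsymm : ∀ a b : H, re ⟪T a, b⟫ = re ⟪T b, a⟫ := by
    intro a b
    have h1 : ⟪T a, b⟫ = ⟪a, T b⟫ := (isSelfAdjoint_iff_isSymmetric.mp hT.isSelfAdjoint) a b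
    rw [h1, inner_re_symm]
  have hq : ∀ t : ℝ, 0 ≤ re ⟪T w, w⟫ * (t * t) + (2 * re ⟪T v, w⟫) * t + re ⟪T v, v⟫ := by
    intro t
    have h0 := hT.re_inner_nonneg_left (v + (t : ℂ) • w)
    have hexp : re ⟪T (v + (t : ℂ) • w), v + (t : ℂ) • w⟫
        = re ⟪T v, v⟫ + t * re ⟪T v, w⟫ + (t * re ⟪T w, v⟫ + t * t * re ⟪T w, w⟫) := by
      rw [map_add, inner_add_left, inner_add_right, inner_add_right, T.map_smul, inner_smul_left, inner_smul_right, inner_smul_left, inner_smul_right]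
      simp [Complex.ofReal_re, mul_assoc]
    rw [hexp, hsymm w v] at h0
    nlinarith [h0]
  have hd := discrim_le_zero hq
  rw [discrim] at hd
  nlinarith [hd]

lemma key_sq_le (T : H →L[ℂ] H) (h0 : 0 ≤ T) (h1 : T ≤ 1) (y : H) :
    ‖T y‖ ^ 2 ≤ re ⟪T y, y⟫ := by
  have hp : T.IsPositive := (nonneg_iff_isPositive T).mp h0
  have h1p : (1 - T).IsPositive := (le_def T 1).mp h1
  have hX : re ⟪T y, T y⟫ = ‖T y‖ ^ 2 := by
    rw [← inner_self_eq_norm_sq (𝕜 := ℂ)]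
  have hB : re ⟪T (T y), T y⟫ ≤ ‖T y‖ ^ 2 := by
    have := h1p.re_inner_nonneg_left (T y)
    simp only [sub_apply, ContinuousLinearMap.one_apply, inner_sub_left, map_sub] at this
    rw [← hX]
    linarith
  have hcs := op_cs T hp y (T y)
  rw [hX] at hcs
  have ha : 0 ≤ re ⟪T y, y⟫ := hp.re_inner_nonneg_left y
  nlinarith [norm_nonneg (T y), sq_nonneg (‖T y‖ ^ 2 - re ⟪T y, y⟫), hcs, hB,
    mul_le_mul_of_nonneg_left hB ha]

lemma key_ineq (T : H →L[ℂ] H) (h0 : 0 ≤ T) (h1 : T ≤ 1) (y : H) :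
    ‖y - T y‖ ^ 2 + ‖T y‖ ^ 2 ≤ ‖y‖ ^ 2 := by
  have hk := key_sq_le T h0 h1 y
  have hexp : ‖y - T y‖ ^ 2 = ‖y‖ ^ 2 - 2 * re ⟪y, T y⟫ + ‖T y‖ ^ 2 :=
    norm_sub_sq (𝕜 := ℂ) y (T y)
  rw [inner_re_symm] at hexp
  linarith

lemma key_contraction (T : H →L[ℂ] H) (h0 : 0 ≤ T) (h1 : T ≤ 1) (y : H) :
    ‖T y‖ ≤ ‖y‖ := by
  have hk := key_sq_le T h0 h1 y
  have h2 : re ⟪T y, y⟫ ≤ ‖T y‖ * ‖y‖ := re_inner_le_norm (𝕜 := ℂ) (T y) y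
  nlinarith [norm_nonneg (T y), norm_nonneg y]



lemma residualProd_succ_apply {Ω : Type*} (Ψ : ℕ → Ω → (H →L[ℂ] H)) (ω : Ω) (n : ℕ) (x : H) :
    residualProd Ψ ω (n + 1) x
      = residualProd Ψ ω n x - Ψ (n + 1) ω (residualProd Ψ ω n x) := by
  simp [residualProd, ContinuousLinearMap.mul_apply, ContinuousLinearMap.sub_apply,
    ContinuousLinearMap.one_apply]

lemma residualProd_zero_apply {Ω : Type*} (Ψ : ℕ → Ω → (H →L[ℂ] H)) (ω : Ω) (x : H) :
    residualProd Ψ ω 0 x = x := by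
  simp [residualProd]

lemma telescope {Ω : Type*} (Ψ : ℕ → Ω → (H →L[ℂ] H)) (ω : Ω) (x : H) : ∀ n : ℕ,
    x - ∑ k ∈ Finset.Icc 1 n, Ψ k ω (residualProd Ψ ω (k - 1) x) = residualProd Ψ ω n x
  | 0 => by simp [residualProd_zero_apply]
  | n + 1 => by
    rw [Finset.sum_Icc_succ_top (by omega : 1 ≤ n + 1), residualProd_succ_apply]
    have := telescope Ψ ω x n
    simp only [Nat.add_sub_cancel]
    rw [← this]
    abel

/-- The residual product applied to `x`, as a function of the sequence of operators. -/
noncomputable def Gfun (x : H) : ℕ → (ℕ → (H →L[ℂ] H)) → H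
  | 0 => fun _ => x
  | n + 1 => fun f => Gfun x n f - f (n + 1) (Gfun x n f)

lemma Gfun_congr (x : H) : ∀ (n : ℕ) (f g : ℕ → (H →L[ℂ] H)),
    (∀ k, 1 ≤ k → k ≤ n → f k = g k) → Gfun x n f = Gfun x n g
  | 0, f, g, _ => rfl
  | n + 1, f, g, h => by
    have ih := Gfun_congr x n f g (fun k h1 h2 => h k h1 (by omega))
    simp only [Gfun, ih, h (n + 1) (by omega) le_rfl]

lemma Gfun_spec {Ω : Type*} (Ψ : ℕ → Ω → (H →L[ℂ] H)) (ω : Ω) (x : H) : ∀ n : ℕ,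
    Gfun x n (fun k => Ψ k ω) = residualProd Ψ ω n x
  | 0 => by simp [Gfun, residualProd_zero_apply]
  | n + 1 => by
    rw [residualProd_succ_apply]
    simp only [Gfun, Gfun_spec Ψ ω x n]

section Meas
variable [MeasurableSpace H] [BorelSpace H] [TopologicalSpace.SeparableSpace H]

lemma eval_measurable (y : H) :
    @Measurable (H →L[ℂ] H) H (strongMS H) _ (fun T => T y) := by
  rw [measurable_iff_comap_le, BorelSpace.measurable_eq (α := H)]
  exact le_iSup (fun x : H => (borel H).comap fun T : H →L[ℂ] H => T x) y

lemma jointEval_measurable :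
    @Measurable (H × (H →L[ℂ] H)) H (@Prod.instMeasurableSpace _ _ _ (strongMS H)) _
      (fun p => p.2 p.1) := by
  letI : MeasurableSpace (H →L[ℂ] H) := strongMS H
  exact measurable_uncurry_of_continuous_of_measurable
    (u := fun (y : H) (T : H →L[ℂ] H) => T y)
    (fun T => T.continuous) (fun y => eval_measurable y)

lemma Gfun_measurable (x : H) : ∀ n : ℕ,
    @Measurable (ℕ → (H →L[ℂ] H)) H (MeasurableSpace.pi (m := fun _ => strongMS H)) _
      (Gfun x n)
  | 0 => measurable_const
  | n + 1 => by
    letI : MeasurableSpace (H →L[ℂ] H) := strongMS H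
    have ih := Gfun_measurable x n
    have h2 : Measurable fun f : ℕ → (H →L[ℂ] H) => f (n + 1) (Gfun x n f) :=
      jointEval_measurable.comp (ih.prodMk (measurable_pi_apply (n + 1)))
    exact ih.sub h2

lemma indep_coercive_bound {Ω : Type*} [MeasureSpace Ω] [IsProbabilityMeasure (ℙ : Measure Ω)]
    (X : Ω → (H →L[ℂ] H)) (Y : Ω → H)
    (hXm : @Measurable Ω (H →L[ℂ] H) _ (strongMS H) X) (hYm : Measurable Y)
    (hind : @ProbabilityTheory.IndepFun Ω H (H →L[ℂ] H) _ _ (strongMS H) Y X ℙ)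
    (C : ℝ) (hC0 : 0 ≤ C)
    (hcontr : ∀ ω y, ‖X ω y‖ ≤ ‖y‖)
    (hcoer : ∀ y : H, C * ‖y‖ ^ 2 ≤ ∫ ω, ‖X ω y‖ ^ 2 ∂(ℙ : Measure Ω)) :
    ENNReal.ofReal C * ∫⁻ ω, ENNReal.ofReal (‖Y ω‖ ^ 2) ∂(ℙ : Measure Ω)
      ≤ ∫⁻ ω, ENNReal.ofReal (‖X ω (Y ω)‖ ^ 2) ∂(ℙ : Measure Ω) := by
  letI : MeasurableSpace (H →L[ℂ] H) := strongMS H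
  set μX := Measure.map X (ℙ : Measure Ω) with hμX
  set μY := Measure.map Y (ℙ : Measure Ω) with hμY
  haveI : IsProbabilityMeasure μX := Measure.isProbabilityMeasure_map hXm.aemeasurable
  haveI : IsProbabilityMeasure μY := Measure.isProbabilityMeasure_map hYm.aemeasurable
  have hpair : Measurable fun ω => (Y ω, X ω) := hYm.prodMk hXm
  have hmap : Measure.map (fun ω => (Y ω, X ω)) (ℙ : Measure Ω) = μY.prod μX :=
    (ProbabilityTheory.indepFun_iff_map_prod_eq_prod_map_map
      hYm.aemeasurable hXm.aemeasurable).mp hind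
  have hfm : Measurable fun p : H × (H →L[ℂ] H) => ENNReal.ofReal (‖p.2 p.1‖ ^ 2) :=
    ((jointEval_measurable.norm).pow_const 2).ennreal_ofReal
  have hinner : ∀ y : H, ENNReal.ofReal C * ENNReal.ofReal (‖y‖ ^ 2)
      ≤ ∫⁻ T, ENNReal.ofReal (‖T y‖ ^ 2) ∂μX := by
    intro y
    have hm : Measurable fun ω => ‖X ω y‖ ^ 2 :=
      (((eval_measurable y).comp hXm).norm).pow_const 2
    have hInt : Integrable (fun ω => ‖X ω y‖ ^ 2) (ℙ : Measure Ω) := by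
      refine (integrable_const (‖y‖ ^ 2)).mono' hm.aestronglyMeasurable ?_
      refine Filter.Eventually.of_forall fun ω => ?_
      rw [Real.norm_of_nonneg (sq_nonneg _)]
      exact pow_le_pow_left₀ (norm_nonneg _) (hcontr ω y) 2
    calc ENNReal.ofReal C * ENNReal.ofReal (‖y‖ ^ 2)
        = ENNReal.ofReal (C * ‖y‖ ^ 2) := (ENNReal.ofReal_mul hC0).symm
      _ ≤ ENNReal.ofReal (∫ ω, ‖X ω y‖ ^ 2 ∂(ℙ : Measure Ω)) :=
          ENNReal.ofReal_le_ofReal (hcoer y)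
      _ = ∫⁻ ω, ENNReal.ofReal (‖X ω y‖ ^ 2) ∂(ℙ : Measure Ω) :=
          ofReal_integral_eq_lintegral_ofReal hInt
            (Filter.Eventually.of_forall fun ω => sq_nonneg _)
      _ = ∫⁻ T, ENNReal.ofReal (‖T y‖ ^ 2) ∂μX := by
          rw [hμX, lintegral_map ((((eval_measurable y).norm).pow_const 2).ennreal_ofReal) hXm]
  calc ENNReal.ofReal C * ∫⁻ ω, ENNReal.ofReal (‖Y ω‖ ^ 2) ∂(ℙ : Measure Ω)
      = ENNReal.ofReal C * ∫⁻ y, ENNReal.ofReal (‖y‖ ^ 2) ∂μY := by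
        rw [hμY, lintegral_map ((measurable_norm.pow_const 2).ennreal_ofReal) hYm]
    _ = ∫⁻ y, ENNReal.ofReal C * ENNReal.ofReal (‖y‖ ^ 2) ∂μY :=
        (lintegral_const_mul _ ((measurable_norm.pow_const 2).ennreal_ofReal)).symm
    _ ≤ ∫⁻ y, ∫⁻ T, ENNReal.ofReal (‖T y‖ ^ 2) ∂μX ∂μY := lintegral_mono hinner
    _ = ∫⁻ p, ENNReal.ofReal (‖p.2 p.1‖ ^ 2) ∂(μY.prod μX) :=
        (MeasureTheory.lintegral_prod _ hfm.aemeasurable).symm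
    _ = ∫⁻ ω, ENNReal.ofReal (‖X ω (Y ω)‖ ^ 2) ∂(ℙ : Measure Ω) := by
        rw [← hmap, lintegral_map hfm hpair]

end Meas

end Aux

/-- For an i.i.d. sequence `(Ψ_k)` of strongly measurable random positive
contractions satisfying the coercivity condition with `0 < C < 1`, the partial sums
`Σ_{k=1}^n Ψ_k (I - Ψ_{k-1})⋯(I - Ψ₁) x` converge to `x` in `L²(Ω, H)`:
`lim_n 𝔼‖x - Σ_{k=1}^n Ψ_k (I - Ψ_{k-1})⋯(I - Ψ₁) x‖² = 0`. -/
theorem meanSquare_convergence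
    {Ω : Type*} [MeasureSpace Ω] [IsProbabilityMeasure (ℙ : Measure Ω)]
    {H : Type*} [NormedAddCommGroup H] [InnerProductSpace ℂ H]
    [CompleteSpace H] [TopologicalSpace.SeparableSpace H]
    [MeasurableSpace H] [BorelSpace H]
    (Ψ : ℕ → Ω → (H →L[ℂ] H))
    (hmeas : ∀ k, ∀ x : H, Measurable fun ω => Ψ k ω x)
    (hpos : ∀ k ω, 0 ≤ Ψ k ω) (hcontr : ∀ k ω, Ψ k ω ≤ 1)
    (hindep : iIndepFun (m := fun _ : ℕ => strongMS H) Ψ (ℙ : Measure Ω))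
    (hident : ∀ i j : ℕ,
      @IdentDistrib Ω Ω (H →L[ℂ] H) _ _ (strongMS H) (Ψ i) (Ψ j) ℙ ℙ)
    (C : ℝ) (hC0 : 0 < C) (hC1 : C < 1)
    (hcoer : ∀ k, ∀ x : H, C * ‖x‖ ^ 2 ≤ ∫ ω : Ω, ‖Ψ k ω x‖ ^ 2 ∂(ℙ : Measure Ω))
    (x : H) :
    Tendsto
      (fun n => ∫ ω : Ω,
        ‖x - ∑ k ∈ Finset.Icc 1 n, Ψ k ω (residualProd Ψ ω (k - 1) x)‖ ^ 2 ∂(ℙ : Measure Ω))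
      atTop (nhds 0) := by
  letI : MeasurableSpace (H →L[ℂ] H) := strongMS H
  -- measurability of the random operators in the strong sense
  have hΨm : ∀ k, Measurable (Ψ k) := by
    intro k
    rw [measurable_iff_comap_le]
    show MeasurableSpace.comap (Ψ k) (strongMS H) ≤ _
    rw [strongMS, MeasurableSpace.comap_iSup]
    refine iSup_le fun y => ?_
    rw [MeasurableSpace.comap_comp, ← BorelSpace.measurable_eq (α := H)]
    exact measurable_iff_comap_le.mp (hmeas k y)
  -- measurability of the residual products applied to x
  have hYmeas : ∀ n, Measurable fun ω => residualProd Ψ ω n x := by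
    intro n
    induction n with
    | zero => simp only [residualProd_zero_apply]; exact measurable_const
    | succ n ih =>
      have hu : Measurable (Function.uncurry fun (y : H) (ω : Ω) => Ψ (n + 1) ω y) :=
        measurable_uncurry_of_continuous_of_measurable
          (fun ω => (Ψ (n + 1) ω).continuous) (fun y => hmeas (n + 1) y)
      have h2 : Measurable fun ω => Ψ (n + 1) ω (residualProd Ψ ω n x) :=
        hu.comp (ih.prodMk measurable_id)
      simp only [residualProd_succ_apply]
      exact ih.sub h2
  -- independence of the residual product from the next operator
  have hindepY : ∀ n, @ProbabilityTheory.IndepFun Ω H (H →L[ℂ] H) _ _ (strongMS H)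
      (fun ω => residualProd Ψ ω n x) (Ψ (n + 1)) ℙ := by
    intro n
    have hdisj : Disjoint (Finset.Icc 1 n) ({n + 1} : Finset ℕ) := by
      rw [Finset.disjoint_left]
      intro k hk hk'
      simp only [Finset.mem_Icc] at hk
      simp only [Finset.mem_singleton] at hk'
      omega
    have base := hindep.indepFun_finset (Finset.Icc 1 n) {n + 1} hdisj hΨm
    set φ : ((Finset.Icc 1 n : Finset ℕ) → (H →L[ℂ] H)) → H :=
      fun t => Gfun x n (fun k => if h : k ∈ Finset.Icc 1 n then t ⟨k, h⟩ else 0) with hφ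
    have hφm : Measurable φ := by
      apply (Gfun_measurable x n).comp
      apply measurable_pi_lambda
      intro k
      by_cases h : k ∈ Finset.Icc 1 n
      · simp only [h, dif_pos]
        exact measurable_pi_apply _
      · simp only [h, dif_neg, not_false_iff]
        exact measurable_const
    set ψ : ((({n + 1} : Finset ℕ) : Finset ℕ) → (H →L[ℂ] H)) → (H →L[ℂ] H) :=
      fun t => t ⟨n + 1, Finset.mem_singleton_self _⟩ with hψ
    have hψm : Measurable ψ := measurable_pi_apply _
    have hcomp := base.comp hφm hψm
    have he1 : (φ ∘ fun ω (i : (Finset.Icc 1 n : Finset ℕ)) => Ψ i ω)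
        = fun ω => residualProd Ψ ω n x := by
      funext ω
      show Gfun x n _ = _
      rw [Gfun_congr x n _ (fun k => Ψ k ω) ?_, Gfun_spec]
      intro k h1 h2
      have hk : k ∈ Finset.Icc 1 n := Finset.mem_Icc.mpr ⟨h1, h2⟩
      simp [hk]
    have he2 : (ψ ∘ fun ω (i : ((({n + 1} : Finset ℕ)) : Finset ℕ)) => Ψ i ω) = Ψ (n + 1) := rfl
    rw [he1, he2] at hcomp
    exact hcomp
  -- the mean-square sequence
  set L : ℕ → ENNReal :=
    fun n => ∫⁻ ω, ENNReal.ofReal (‖residualProd Ψ ω n x‖ ^ 2) ∂(ℙ : Measure Ω) with hLdef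
  have hLmeas : ∀ n, Measurable fun ω => ENNReal.ofReal (‖residualProd Ψ ω n x‖ ^ 2) :=
    fun n => (((hYmeas n).norm).pow_const 2).ennreal_ofReal
  have hstep : ∀ n, L (n + 1) +
      ∫⁻ ω, ENNReal.ofReal (‖Ψ (n + 1) ω (residualProd Ψ ω n x)‖ ^ 2) ∂(ℙ : Measure Ω)
      ≤ L n := by
    intro n
    rw [hLdef]
    rw [← lintegral_add_left (hLmeas (n + 1))]
    refine lintegral_mono fun ω => ?_
    rw [← ENNReal.ofReal_add (sq_nonneg _) (sq_nonneg _)]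
    apply ENNReal.ofReal_le_ofReal
    rw [residualProd_succ_apply]
    exact key_ineq (Ψ (n + 1) ω) (hpos _ _) (hcontr _ _) (residualProd Ψ ω n x)
  have hcoerY : ∀ n, ENNReal.ofReal C * L n ≤
      ∫⁻ ω, ENNReal.ofReal (‖Ψ (n + 1) ω (residualProd Ψ ω n x)‖ ^ 2) ∂(ℙ : Measure Ω) := by
    intro n
    exact indep_coercive_bound (Ψ (n + 1)) (fun ω => residualProd Ψ ω n x)
      (hΨm (n + 1)) (hYmeas n) (hindepY n) C hC0.le
      (fun ω y => key_contraction _ (hpos _ _) (hcontr _ _) y) (hcoer (n + 1))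
  have hLbound : ∀ n, L n ≤ ENNReal.ofReal ((1 - C) ^ n * ‖x‖ ^ 2) := by
    intro n
    induction n with
    | zero =>
      simp only [pow_zero, one_mul]
      have heq0 : (fun ω => ENNReal.ofReal (‖residualProd Ψ ω 0 x‖ ^ 2))
          = fun _ : Ω => ENNReal.ofReal (‖x‖ ^ 2) :=
        funext fun ω => by rw [residualProd_zero_apply]
      show (∫⁻ ω, ENNReal.ofReal (‖residualProd Ψ ω 0 x‖ ^ 2) ∂(ℙ : Measure Ω)) ≤ _
      rw [heq0, lintegral_const, measure_univ, mul_one]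
    | succ n ih =>
      have hfin : L n ≠ ⊤ := (lt_of_le_of_lt ih ENNReal.ofReal_lt_top).ne
      have h1 : L (n + 1) ≤ L n - ENNReal.ofReal C * L n := by
        have hBfin : (∫⁻ ω, ENNReal.ofReal
            (‖Ψ (n + 1) ω (residualProd Ψ ω n x)‖ ^ 2) ∂(ℙ : Measure Ω)) ≠ ⊤ :=
          ((le_add_self.trans (hstep n)).trans_lt
            (lt_of_le_of_lt ih ENNReal.ofReal_lt_top)).ne
        exact le_trans (ENNReal.le_sub_of_add_le_right hBfin (hstep n))
          (tsub_le_tsub_left (hcoerY n) _)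
      have h2 : L n - ENNReal.ofReal C * L n = (1 - ENNReal.ofReal C) * L n := by
        rw [ENNReal.sub_mul (fun _ _ => hfin), one_mul]
      have h3 : (1 : ENNReal) - ENNReal.ofReal C = ENNReal.ofReal (1 - C) := by
        rw [ENNReal.ofReal_sub 1 hC0.le, ENNReal.ofReal_one]
      calc L (n + 1) ≤ (1 - ENNReal.ofReal C) * L n := by rw [← h2]; exact h1
        _ ≤ ENNReal.ofReal (1 - C) * ENNReal.ofReal ((1 - C) ^ n * ‖x‖ ^ 2) := by
            rw [h3]; exact mul_le_mul_right ih _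
        _ = ENNReal.ofReal ((1 - C) ^ (n + 1) * ‖x‖ ^ 2) := by
            rw [← ENNReal.ofReal_mul (by linarith)]
            congr 1
            ring
  -- rewrite the integrals via the telescoping identity
  have hint : ∀ n, (∫ ω : Ω,
      ‖x - ∑ k ∈ Finset.Icc 1 n, Ψ k ω (residualProd Ψ ω (k - 1) x)‖ ^ 2 ∂(ℙ : Measure Ω))
      = (L n).toReal := by
    intro n
    have heq : (fun ω : Ω =>
        ‖x - ∑ k ∈ Finset.Icc 1 n, Ψ k ω (residualProd Ψ ω (k - 1) x)‖ ^ 2)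
        = fun ω => ‖residualProd Ψ ω n x‖ ^ 2 := funext fun ω => by rw [telescope]
    rw [show (∫ ω : Ω,
        ‖x - ∑ k ∈ Finset.Icc 1 n, Ψ k ω (residualProd Ψ ω (k - 1) x)‖ ^ 2 ∂(ℙ : Measure Ω))
        = ∫ ω : Ω, ‖residualProd Ψ ω n x‖ ^ 2 ∂(ℙ : Measure Ω) from by rw [heq]]
    rw [integral_eq_lintegral_of_nonneg_ae (Filter.Eventually.of_forall fun ω => sq_nonneg _)
      ((((hYmeas n).norm).pow_const 2)).aestronglyMeasurable]
  simp only [hint]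
  refine squeeze_zero (fun n => ENNReal.toReal_nonneg)
    (fun n => ENNReal.toReal_le_of_le_ofReal
      (mul_nonneg (pow_nonneg (by linarith) n) (sq_nonneg _)) (hLbound n)) ?_
  have h0 : Tendsto (fun n => (1 - C) ^ n) atTop (nhds (0 : ℝ)) :=
    tendsto_pow_atTop_nhds_zero_of_lt_one (by linarith) (by linarith)
  simpa using h0.mul_const (‖x‖ ^ 2)
end

section
/- Let (Ω, 𝔽, ℙ) be a probability space, H a separable complex Hilbert space, and (Ψ_k)_{k∈ℕ} an i.i.d. sequence of strongly measurable random operators on H taking values in positive contractions, satisfying the coercivity condition 𝔼‖Ψ_k x‖² ≥ C‖x‖² for all x ∈ H with a constant 0 < C < 1. Then for every x ∈ H, almost surely x = lim_{n→∞} Σ_{k=1}^{n} Ψ_k (I − Ψ_{k−1})⋯(I − Ψ₁) x, i.e. the operator identity I = Σ_{k=1}^{∞} Ψ_k (I − Ψ_{k−1})⋯(I − Ψ₁) holds almost surely in the strong sense. -/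
open MeasureTheory ProbabilityTheory Filter

section Aux

variable {H : Type*} [NormedAddCommGroup H] [InnerProductSpace ℂ H] [CompleteSpace H]

/-- For a positive contraction `T`, one has `T * T ≤ T`. -/
lemma ase_sq_le_self (T : H →L[ℂ] H) (h0 : 0 ≤ T) (h1 : T ≤ 1) : T * T ≤ T := by
  rcases subsingleton_or_nontrivial H with hs | hn
  · have : Subsingleton (H →L[ℂ] H) := by infer_instance
    simp [Subsingleton.elim (T * T) T, le_refl]
  have hspec : ∀ r ∈ spectrum ℝ T, 0 ≤ r ∧ r ≤ 1 := by
    intro r hr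
    refine ⟨spectrum_nonneg_of_nonneg h0 hr, ?_⟩
    have hnrm : ‖T‖ ≤ 1 := (CStarAlgebra.norm_le_one_iff_of_nonneg T h0).mpr h1
    have := spectrum.norm_le_norm_of_mem hr
    calc r ≤ |r| := le_abs_self r
      _ ≤ ‖T‖ := by simpa using this
      _ ≤ 1 := hnrm
  have hsa : IsSelfAdjoint T := ((ContinuousLinearMap.nonneg_iff_isPositive T).mp h0).isSelfAdjoint
  have h2 : T - T * T = cfc (fun r : ℝ => r - r * r) T := by
    rw [cfc_sub _ _ T, cfc_id' ℝ T, cfc_mul _ _ T, cfc_id' ℝ T]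
  have h3 : (0 : H →L[ℂ] H) ≤ T - T * T := by
    rw [h2]
    apply cfc_nonneg
    intro r hr
    obtain ⟨h4, h5⟩ := hspec r hr
    nlinarith
  exact sub_nonneg.mp h3

/-- The key pointwise inequality for positive contractions. -/
lemma ase_key_ineq (T : H →L[ℂ] H) (h0 : 0 ≤ T) (h1 : T ≤ 1) (y : H) :
    ‖(1 - T) y‖ ^ 2 ≤ ‖y‖ ^ 2 - ‖T y‖ ^ 2 := by
  have hTT := ase_sq_le_self T h0 h1
  have hsa : IsSelfAdjoint T := ((ContinuousLinearMap.nonneg_iff_isPositive T).mp h0).isSelfAdjoint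
  have hkey : ‖T y‖ ^ 2 ≤ RCLike.re (inner ℂ (T y) y) := by
    have hpos : (T - T * T).IsPositive := (ContinuousLinearMap.le_def _ _).mp hTT
    have h := hpos.re_inner_nonneg_left y
    rw [ContinuousLinearMap.sub_apply, inner_sub_left, map_sub] at h
    have h2 : inner ℂ ((T * T) y) y = inner ℂ (T y) (T y) := by
      rw [ContinuousLinearMap.mul_apply, ← ContinuousLinearMap.adjoint_inner_right, hsa.adjoint_eq]
    rw [h2] at h
    have h3 : RCLike.re (inner ℂ (T y) (T y)) = ‖T y‖ ^ 2 := by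
      rw [inner_self_eq_norm_sq]
    linarith
  have hexp : ‖(1 - T) y‖ ^ 2 = ‖y‖ ^ 2 - 2 * RCLike.re (inner ℂ y (T y)) + ‖T y‖ ^ 2 := by
    have h4 : (1 - T) y = y - T y := by simp [ContinuousLinearMap.sub_apply]
    rw [h4, @norm_sub_sq ℂ]
  rw [inner_re_symm] at hexp
  linarith

lemma ase_norm_apply_le (T : H →L[ℂ] H) (h0 : 0 ≤ T) (h1 : T ≤ 1) (y : H) :
    ‖T y‖ ≤ ‖y‖ ∧ ‖(1 - T) y‖ ≤ ‖y‖ := by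
  have h := ase_key_ineq T h0 h1 y
  have h2 : ‖T y‖ ^ 2 ≤ ‖y‖ ^ 2 := by nlinarith [sq_nonneg ‖(1 - T) y‖]
  have h3 : ‖(1 - T) y‖ ^ 2 ≤ ‖y‖ ^ 2 := by nlinarith [sq_nonneg ‖T y‖]
  exact ⟨(pow_le_pow_iff_left₀ (norm_nonneg _) (norm_nonneg _) two_ne_zero).mp h2,
    (pow_le_pow_iff_left₀ (norm_nonneg _) (norm_nonneg _) two_ne_zero).mp h3⟩

variable [TopologicalSpace.SeparableSpace H] [MeasurableSpace H] [BorelSpace H]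

open Classical in
/-- Measurability of `ω ↦ A ω (Y ω)` when `A` is strongly measurable and `Y` measurable. -/
lemma ase_meas_apply {Ω : Type*} {m : MeasurableSpace Ω} (A : Ω → (H →L[ℂ] H))
    (hA : ∀ c : H, Measurable[m] fun ω => A ω c) {Y : Ω → H} (hY : Measurable[m] Y) :
    Measurable[m] fun ω => A ω (Y ω) := by
  have hsm : StronglyMeasurable[m] Y := hY.stronglyMeasurable
  have hstep : ∀ s : @SimpleFunc Ω m H, Measurable[m] fun ω => A ω (s ω) := by
    intro s
    have heq : (fun ω => A ω (s ω)) = fun ω => ∑ c ∈ s.range, if s ω = c then A ω c else 0 := by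
      funext ω
      rw [Finset.sum_ite_eq s.range (s ω) fun c => A ω c]
      simp [SimpleFunc.mem_range_self]
    rw [heq]
    apply Finset.measurable_sum
    intro c _
    exact Measurable.ite (s.measurableSet_fiber c) (hA c) measurable_const
  apply measurable_of_tendsto_metrizable (fun n => hstep (hsm.approx n))
  rw [tendsto_pi_nhds]
  intro ω
  exact ((A ω).continuous.tendsto _).comp (hsm.tendsto_approx ω)

lemma ase_telescope {Ω : Type*} (Ψ : ℕ → Ω → (H →L[ℂ] H)) (ω : Ω) (x : H) (n : ℕ) :
    ∑ k ∈ Finset.Icc 1 n, Ψ k ω (residualProd Ψ ω (k - 1) x)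
      = x - residualProd Ψ ω n x := by
  induction n with
  | zero => simp [residualProd]
  | succ n ih =>
    rw [Finset.sum_Icc_succ_top (Nat.one_le_iff_ne_zero.mpr (Nat.succ_ne_zero n)), ih]
    have h : residualProd Ψ ω (n + 1) x
        = residualProd Ψ ω n x - Ψ (n + 1) ω (residualProd Ψ ω n x) := by
      show ((1 - Ψ (n + 1) ω) * residualProd Ψ ω n) x = _
      simp [ContinuousLinearMap.mul_apply, ContinuousLinearMap.sub_apply]
    simp only [Nat.add_sub_cancel, h]
    abel

end Aux

/-- For an i.i.d. sequence `(Ψ_k)` of strongly measurable random positive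
contractions satisfying the coercivity condition with `0 < C < 1`, for every `x ∈ H` one has,
almost surely, `x = lim_n Σ_{k=1}^n Ψ_k (I - Ψ_{k-1})⋯(I - Ψ₁) x`; i.e. the operator identity
`I = Σ_{k=1}^∞ Ψ_k (I - Ψ_{k-1})⋯(I - Ψ₁)` holds a.s. in the strong sense. -/
theorem almost_sure_expansion
    {Ω : Type*} [MeasureSpace Ω] [IsProbabilityMeasure (ℙ : Measure Ω)]
    {H : Type*} [NormedAddCommGroup H] [InnerProductSpace ℂ H]
    [CompleteSpace H] [TopologicalSpace.SeparableSpace H]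
    [MeasurableSpace H] [BorelSpace H]
    (Ψ : ℕ → Ω → (H →L[ℂ] H))
    (hmeas : ∀ k, ∀ x : H, Measurable fun ω => Ψ k ω x)
    (hpos : ∀ k ω, 0 ≤ Ψ k ω) (hcontr : ∀ k ω, Ψ k ω ≤ 1)
    (hindep : iIndepFun (m := fun _ : ℕ => strongMS H) Ψ (ℙ : Measure Ω))
    (hident : ∀ i j : ℕ,
      @IdentDistrib Ω Ω (H →L[ℂ] H) _ _ (strongMS H) (Ψ i) (Ψ j) ℙ ℙ)
    (C : ℝ) (hC0 : 0 < C) (hC1 : C < 1)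
    (hcoer : ∀ k, ∀ x : H, C * ‖x‖ ^ 2 ≤ ∫ ω : Ω, ‖Ψ k ω x‖ ^ 2 ∂(ℙ : Measure Ω))
    (x : H) :
    ∀ᵐ ω ∂(ℙ : Measure Ω),
      Tendsto (fun n => ∑ k ∈ Finset.Icc 1 n, Ψ k ω (residualProd Ψ ω (k - 1) x))
        atTop (nhds x) := by
  classical
  set Y : ℕ → Ω → H := fun n ω => residualProd Ψ ω n x with hY_def
  have hYsucc : ∀ n ω, Y (n + 1) ω = (1 - Ψ (n + 1) ω) (Y n ω) := by
    intro n ω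
    show ((1 - Ψ (n + 1) ω) * residualProd Ψ ω n) x = _
    rw [ContinuousLinearMap.mul_apply]
  have hYnorm : ∀ n ω, ‖Y n ω‖ ≤ ‖x‖ := by
    intro n
    induction n with
    | zero => intro ω; simp [hY_def, residualProd]
    | succ n ih =>
      intro ω
      rw [hYsucc]
      exact ((ase_norm_apply_le _ (hpos _ _) (hcontr _ _) _).2).trans (ih ω)
  -- σ-algebras
  set m' : ℕ → MeasurableSpace Ω := fun k => (strongMS H).comap (Ψ k) with hm'_def
  have hborel : borel H = ‹MeasurableSpace H› := BorelSpace.measurable_eq.symm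
  have hcomap_le : ∀ k (c : H),
      MeasurableSpace.comap (fun ω => Ψ k ω c) (inferInstance : MeasurableSpace H) ≤ m' k := by
    intro k c
    have h1 : (fun ω => Ψ k ω c) = (fun T : H →L[ℂ] H => T c) ∘ Ψ k := rfl
    rw [h1, ← MeasurableSpace.comap_comp]
    apply MeasurableSpace.comap_mono
    rw [strongMS, ← hborel]
    exact le_iSup (fun x : H => (borel H).comap fun T : H →L[ℂ] H => T x) c
  have hm'_le : ∀ k, m' k ≤ (inferInstance : MeasurableSpace Ω) := by
    intro k
    show (strongMS H).comap (Ψ k) ≤ _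
    rw [strongMS, MeasurableSpace.comap_iSup]
    apply iSup_le
    intro c
    rw [MeasurableSpace.comap_comp, hborel]
    exact Measurable.comap_le (hmeas k c)
  have hm'_meas : ∀ k (c : H), Measurable[m' k] fun ω => Ψ k ω c :=
    fun k c => Measurable.of_comap_le (hcomap_le k c)
  set M : ℕ → MeasurableSpace Ω := fun n => ⨆ k ∈ Set.Iic n, m' k with hM_def
  have hM_le : ∀ n, M n ≤ (inferInstance : MeasurableSpace Ω) := fun n => iSup₂_le fun k _ => hm'_le k
  have hm'_le_M : ∀ k n, k ≤ n → m' k ≤ M n := by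
    intro k n hk
    exact le_biSup m' hk
  have hM_mono : ∀ n, M n ≤ M (n + 1) := by
    intro n
    apply iSup₂_le
    intro k hk
    exact le_biSup m' (le_trans hk (Nat.le_succ n))
  have hYmeasM : ∀ n, Measurable[M n] (Y n) := by
    intro n
    induction n with
    | zero =>
      have : Y 0 = fun _ => x := by funext ω; simp [hY_def, residualProd]
      rw [this]; exact measurable_const
    | succ n ih =>
      have h1 : Measurable[M (n + 1)] (Y n) := ih.mono (hM_mono n) le_rfl
      have heq : Y (n + 1) = fun ω => Y n ω - Ψ (n + 1) ω (Y n ω) := by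
        funext ω
        rw [hYsucc n ω, ContinuousLinearMap.sub_apply, ContinuousLinearMap.one_apply]
      rw [heq]
      apply Measurable.sub h1
      exact ase_meas_apply (fun ω => Ψ (n + 1) ω)
        (fun c => (hm'_meas (n + 1) c).mono (hm'_le_M (n + 1) (n + 1) le_rfl) le_rfl) h1
  have hYmeas : ∀ n, Measurable (Y n) := fun n => (hYmeasM n).mono (hM_le n) le_rfl
  -- independence
  have hIndep : ∀ n, Indep (M n) (m' (n + 1)) ℙ := by
    intro n
    have h0 : iIndep m' ℙ := (iIndepFun_iff_iIndep _ _ _).mp hindep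
    have hdisj : Disjoint (Set.Iic n) ({n + 1} : Set ℕ) := by
      simp only [Set.disjoint_singleton_right, Set.mem_Iic]
      omega
    have := indep_iSup_of_disjoint hm'_le h0 hdisj
    simpa only [Set.mem_singleton_iff, iSup_iSup_eq_left] using this
  -- integrability helper
  have hintb : ∀ {g : Ω → ℝ}, Measurable g → ∀ B : ℝ, (∀ ω, |g ω| ≤ B) →
      Integrable g (ℙ : Measure Ω) := by
    intro g hg B hB
    exact ⟨hg.aestronglyMeasurable,
      HasFiniteIntegral.of_bounded (C := B) (ae_of_all _ fun ω => by
        simpa [Real.norm_eq_abs] using hB ω)⟩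
  -- pointwise-in-c integral bound
  have hmg : ∀ k (c : H), Measurable fun ω => ‖(1 - Ψ k ω) c‖ ^ 2 := by
    intro k c
    have h1 : (fun ω => (1 - Ψ k ω) c) = fun ω => c - Ψ k ω c := by
      funext ω; simp [ContinuousLinearMap.sub_apply]
    have h2 : Measurable fun ω => (1 - Ψ k ω) c := by
      rw [h1]; exact measurable_const.sub (hmeas k c)
    exact h2.norm.pow_const 2
  have hconst : ∀ k (c : H),
      ∫ ω, ‖(1 - Ψ k ω) c‖ ^ 2 ∂(ℙ : Measure Ω) ≤ (1 - C) * ‖c‖ ^ 2 := by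
    intro k c
    have hkey : ∀ ω, ‖(1 - Ψ k ω) c‖ ^ 2 ≤ ‖c‖ ^ 2 - ‖Ψ k ω c‖ ^ 2 :=
      fun ω => ase_key_ineq _ (hpos k ω) (hcontr k ω) c
    have hb1 : ∀ ω, |‖(1 - Ψ k ω) c‖ ^ 2| ≤ ‖c‖ ^ 2 := by
      intro ω
      rw [abs_of_nonneg (sq_nonneg _)]
      have := (ase_norm_apply_le _ (hpos k ω) (hcontr k ω) c).2
      nlinarith [norm_nonneg ((1 - Ψ k ω) c)]
    have hb2 : ∀ ω, |‖Ψ k ω c‖ ^ 2| ≤ ‖c‖ ^ 2 := by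
      intro ω
      rw [abs_of_nonneg (sq_nonneg _)]
      have := (ase_norm_apply_le _ (hpos k ω) (hcontr k ω) c).1
      nlinarith [norm_nonneg (Ψ k ω c)]
    have hint1 : Integrable (fun ω => ‖(1 - Ψ k ω) c‖ ^ 2) ℙ := hintb (hmg k c) _ hb1
    have hint3 : Integrable (fun ω => ‖Ψ k ω c‖ ^ 2) ℙ := hintb ((hmeas k c).norm.pow_const 2) _ hb2
    have hint2 : Integrable (fun ω => ‖c‖ ^ 2 - ‖Ψ k ω c‖ ^ 2) ℙ := (integrable_const _).sub hint3
    calc ∫ ω, ‖(1 - Ψ k ω) c‖ ^ 2 ∂(ℙ : Measure Ω)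
        ≤ ∫ ω, (‖c‖ ^ 2 - ‖Ψ k ω c‖ ^ 2) ∂(ℙ : Measure Ω) := integral_mono hint1 hint2 hkey
      _ = ‖c‖ ^ 2 - ∫ ω, ‖Ψ k ω c‖ ^ 2 ∂(ℙ : Measure Ω) := by
          rw [integral_sub (integrable_const _) hint3, integral_const]
          simp
      _ ≤ ‖c‖ ^ 2 - C * ‖c‖ ^ 2 := by linarith [hcoer k c]
      _ = (1 - C) * ‖c‖ ^ 2 := by ring
  have hb1 : ∀ k (ω : Ω) (y : H), ‖(1 - Ψ k ω) y‖ ^ 2 ≤ ‖y‖ ^ 2 := by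
    intro k ω y
    have := (ase_norm_apply_le _ (hpos k ω) (hcontr k ω) y).2
    nlinarith [norm_nonneg ((1 - Ψ k ω) y)]
  -- the main contraction estimate along the chain
  have hchain : ∀ n, ∫ ω, ‖Y (n + 1) ω‖ ^ 2 ∂(ℙ : Measure Ω)
      ≤ (1 - C) * ∫ ω, ‖Y n ω‖ ^ 2 ∂(ℙ : Measure Ω) := by
    intro n
    have hsmid : StronglyMeasurable (id : H → H) := stronglyMeasurable_id
    set sg : ℕ → SimpleFunc H H := fun m => hsmid.approxBounded ‖x‖ m with hsg_def
    have hsg_norm : ∀ m (y : H), ‖sg m y‖ ≤ ‖x‖ := fun m y =>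
      hsmid.norm_approxBounded_le (norm_nonneg x) m y
    have hsg_tendsto : ∀ y : H, ‖y‖ ≤ ‖x‖ → Tendsto (fun m => sg m y) atTop (nhds y) := by
      intro y hy
      have := hsmid.tendsto_approxBounded_of_norm_le (x := y) (c := ‖x‖) (by simpa using hy)
      simpa using this
    set s : ℕ → Ω → H := fun m ω => sg m (Y n ω) with hs_def
    have hs_norm : ∀ m ω, ‖s m ω‖ ≤ ‖x‖ := fun m ω => hsg_norm m (Y n ω)
    have hs_tendsto : ∀ ω, Tendsto (fun m => s m ω) atTop (nhds (Y n ω)) :=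
      fun ω => hsg_tendsto (Y n ω) (hYnorm n ω)
    have hs_measM : ∀ m, Measurable[M n] (s m) := fun m => (sg m).measurable.comp (hYmeasM n)
    have hs_meas : ∀ m, Measurable (s m) := fun m => (hs_measM m).mono (hM_le n) le_rfl
    have hclaim : ∀ m, ∫ ω, ‖(1 - Ψ (n + 1) ω) (s m ω)‖ ^ 2 ∂(ℙ : Measure Ω)
        ≤ (1 - C) * ∫ ω, ‖s m ω‖ ^ 2 ∂(ℙ : Measure Ω) := by
      intro m
      set t : Ω → H := s m with ht_def
      have htmem : ∀ ω, t ω ∈ (sg m).range := fun ω => SimpleFunc.mem_range_self _ (Y n ω)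
      have hdec1 : (fun ω => ‖(1 - Ψ (n + 1) ω) (t ω)‖ ^ 2)
          = fun ω => ∑ c ∈ (sg m).range, if t ω = c then ‖(1 - Ψ (n + 1) ω) c‖ ^ 2 else 0 := by
        funext ω
        rw [Finset.sum_ite_eq (sg m).range (t ω) fun c => ‖(1 - Ψ (n + 1) ω) c‖ ^ 2]
        simp [htmem ω]
      have hdec2 : (fun ω => ‖t ω‖ ^ 2)
          = fun ω => ∑ c ∈ (sg m).range, if t ω = c then ‖c‖ ^ 2 else 0 := by
        funext ω
        rw [Finset.sum_ite_eq (sg m).range (t ω) fun c => ‖c‖ ^ 2]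
        simp [htmem ω]
      have hfib : ∀ c : H, MeasurableSet[M n] (t ⁻¹' {c}) := fun c =>
        hs_measM m (measurableSet_singleton c)
      have hfib' : ∀ c : H, MeasurableSet (t ⁻¹' {c}) := fun c => (hM_le n) _ (hfib c)
      have hint1 : ∀ c : H,
          Integrable (fun ω => if t ω = c then ‖(1 - Ψ (n + 1) ω) c‖ ^ 2 else 0) ℙ := by
        intro c
        apply hintb (Measurable.ite (hfib' c) (hmg (n + 1) c) measurable_const) (‖c‖ ^ 2)
        intro ω
        split_ifs with h
        · rw [abs_of_nonneg (sq_nonneg _)]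
          exact hb1 (n + 1) ω c
        · rw [abs_zero]
          positivity
      have hint2 : ∀ c : H, Integrable (fun ω => if t ω = c then ‖c‖ ^ 2 else 0) ℙ := by
        intro c
        apply hintb (Measurable.ite (hfib' c) measurable_const measurable_const) (‖c‖ ^ 2)
        intro ω
        split_ifs with h
        · rw [abs_of_nonneg (sq_nonneg _)]
        · rw [abs_zero]
          positivity
      have hterm : ∀ c ∈ (sg m).range,
          ∫ ω, (if t ω = c then ‖(1 - Ψ (n + 1) ω) c‖ ^ 2 else 0) ∂(ℙ : Measure Ω)
            ≤ (1 - C) * ∫ ω, (if t ω = c then ‖c‖ ^ 2 else 0) ∂(ℙ : Measure Ω) := by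
        intro c _
        set X : Ω → ℝ := (t ⁻¹' {c}).indicator fun _ => (1 : ℝ) with hX_def
        set g : Ω → ℝ := fun ω => ‖(1 - Ψ (n + 1) ω) c‖ ^ 2 with hg_def
        have hXg : (fun ω => if t ω = c then ‖(1 - Ψ (n + 1) ω) c‖ ^ 2 else 0) = X * g := by
          funext ω
          by_cases h : t ω = c <;>
            simp [hX_def, hg_def, Set.indicator_apply, Set.mem_preimage, Set.mem_singleton_iff, h]
        have hXmeasM : Measurable[M n] X := measurable_const.indicator (hfib c)
        have hgmeas' : Measurable[m' (n + 1)] g := by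
          have h1 : Measurable[m' (n + 1)] fun ω => c - Ψ (n + 1) ω c :=
            measurable_const.sub (hm'_meas (n + 1) c)
          have h2 : g = fun ω => ‖c - Ψ (n + 1) ω c‖ ^ 2 := by
            funext ω; simp [hg_def, ContinuousLinearMap.sub_apply]
          have houter : Measurable fun y : H => ‖y‖ ^ 2 := measurable_norm.pow_const 2
          rw [h2]; exact houter.comp h1
        have hindepXg : IndepFun X g ℙ := by
          rw [IndepFun_iff_Indep]
          exact indep_of_indep_of_le_left
            (indep_of_indep_of_le_right (hIndep n) (Measurable.comap_le hgmeas'))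
            (Measurable.comap_le hXmeasM)
        have hXnn : 0 ≤ X := fun ω => Set.indicator_nonneg (fun _ _ => zero_le_one) ω
        have hgnn : 0 ≤ g := fun ω => sq_nonneg _
        have hmul := IndepFun.integral_mul_eq_mul_integral hindepXg
          (measurable_const.indicator (hfib' c)).aestronglyMeasurable (hmg (n + 1) c).aestronglyMeasurable
        have hIX : ∫ ω, X ω ∂(ℙ : Measure Ω) = (ℙ (t ⁻¹' {c})).toReal := by
          rw [hX_def, integral_indicator_const (1 : ℝ) (hfib' c)]; simp; rfl
        have hI2 : ∫ ω, (if t ω = c then ‖c‖ ^ 2 else 0) ∂(ℙ : Measure Ω)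
            = (ℙ (t ⁻¹' {c})).toReal * ‖c‖ ^ 2 := by
          have h3 : (fun ω => if t ω = c then ‖c‖ ^ 2 else 0)
              = (t ⁻¹' {c}).indicator fun _ => ‖c‖ ^ 2 := by
            funext ω
            by_cases h : t ω = c <;>
              simp [Set.indicator_apply, Set.mem_preimage, Set.mem_singleton_iff, h]
          rw [h3, integral_indicator_const _ (hfib' c), smul_eq_mul]; rfl
        rw [hXg, hmul, hIX, hI2]
        calc (ℙ (t ⁻¹' {c})).toReal * ∫ ω, g ω ∂(ℙ : Measure Ω)
            ≤ (ℙ (t ⁻¹' {c})).toReal * ((1 - C) * ‖c‖ ^ 2) :=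
              mul_le_mul_of_nonneg_left (hconst (n + 1) c) ENNReal.toReal_nonneg
          _ = (1 - C) * ((ℙ (t ⁻¹' {c})).toReal * ‖c‖ ^ 2) := by ring
      calc ∫ ω, ‖(1 - Ψ (n + 1) ω) (t ω)‖ ^ 2 ∂(ℙ : Measure Ω)
          = ∑ c ∈ (sg m).range,
              ∫ ω, (if t ω = c then ‖(1 - Ψ (n + 1) ω) c‖ ^ 2 else 0) ∂(ℙ : Measure Ω) := by
            rw [hdec1]
            exact integral_finset_sum _ fun c _ => hint1 c
        _ ≤ ∑ c ∈ (sg m).range,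
              (1 - C) * ∫ ω, (if t ω = c then ‖c‖ ^ 2 else 0) ∂(ℙ : Measure Ω) :=
            Finset.sum_le_sum hterm
        _ = (1 - C) * ∑ c ∈ (sg m).range,
              ∫ ω, (if t ω = c then ‖c‖ ^ 2 else 0) ∂(ℙ : Measure Ω) := by
            rw [Finset.mul_sum]
        _ = (1 - C) * ∫ ω, ‖t ω‖ ^ 2 ∂(ℙ : Measure Ω) := by
            rw [hdec2, integral_finset_sum _ fun c _ => hint2 c]
    -- pass to the limit in the simple-function approximation
    have hAmeas : ∀ c : H, Measurable fun ω => (1 - Ψ (n + 1) ω) c := by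
      intro c
      have h4 : (fun ω => (1 - Ψ (n + 1) ω) c) = fun ω => c - Ψ (n + 1) ω c := by
        funext ω; simp [ContinuousLinearMap.sub_apply]
      rw [h4]; exact measurable_const.sub (hmeas (n + 1) c)
    have hmeasF : ∀ m, AEStronglyMeasurable (fun ω => ‖(1 - Ψ (n + 1) ω) (s m ω)‖ ^ 2)
        (ℙ : Measure Ω) := by
      intro m
      have h1 : Measurable fun ω => (1 - Ψ (n + 1) ω) (s m ω) :=
        ase_meas_apply (fun ω => 1 - Ψ (n + 1) ω) hAmeas (hs_meas m)
      exact (h1.norm.pow_const 2).aestronglyMeasurable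
    have hlim1 : Tendsto (fun m => ∫ ω, ‖(1 - Ψ (n + 1) ω) (s m ω)‖ ^ 2 ∂(ℙ : Measure Ω)) atTop
        (nhds (∫ ω, ‖(1 - Ψ (n + 1) ω) (Y n ω)‖ ^ 2 ∂(ℙ : Measure Ω))) := by
      apply tendsto_integral_of_dominated_convergence (fun _ => ‖x‖ ^ 2) hmeasF (integrable_const _)
      · intro m
        apply ae_of_all
        intro ω
        rw [Real.norm_eq_abs, abs_of_nonneg (sq_nonneg _)]
        calc ‖(1 - Ψ (n + 1) ω) (s m ω)‖ ^ 2 ≤ ‖s m ω‖ ^ 2 := hb1 (n + 1) ω (s m ω)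
          _ ≤ ‖x‖ ^ 2 := by nlinarith [hs_norm m ω, norm_nonneg (s m ω)]
      · apply ae_of_all
        intro ω
        have hcont : Continuous fun y : H => ‖(1 - Ψ (n + 1) ω) y‖ ^ 2 :=
          ((1 - Ψ (n + 1) ω).continuous.norm).pow 2
        exact (hcont.tendsto _).comp (hs_tendsto ω)
    have hlim2 : Tendsto (fun m => ∫ ω, ‖s m ω‖ ^ 2 ∂(ℙ : Measure Ω)) atTop
        (nhds (∫ ω, ‖Y n ω‖ ^ 2 ∂(ℙ : Measure Ω))) := by
      apply tendsto_integral_of_dominated_convergence (fun _ => ‖x‖ ^ 2)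
        (fun m => ((hs_meas m).norm.pow_const 2).aestronglyMeasurable) (integrable_const _)
      · intro m
        apply ae_of_all
        intro ω
        rw [Real.norm_eq_abs, abs_of_nonneg (sq_nonneg _)]
        nlinarith [hs_norm m ω, norm_nonneg (s m ω)]
      · apply ae_of_all
        intro ω
        have hcont : Continuous fun y : H => ‖y‖ ^ 2 := continuous_norm.pow 2
        exact (hcont.tendsto _).comp (hs_tendsto ω)
    have hle := le_of_tendsto_of_tendsto' hlim1 (hlim2.const_mul (1 - C)) hclaim
    have h5 : (fun ω => ‖Y (n + 1) ω‖ ^ 2) = fun ω => ‖(1 - Ψ (n + 1) ω) (Y n ω)‖ ^ 2 := by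
      funext ω; rw [hYsucc]
    rw [h5]
    exact hle
  -- geometric decay of the second moments
  have hbase : ∫ ω, ‖Y 0 ω‖ ^ 2 ∂(ℙ : Measure Ω) = ‖x‖ ^ 2 := by
    have h6 : (fun ω : Ω => ‖Y 0 ω‖ ^ 2) = fun _ => ‖x‖ ^ 2 := by
      funext ω; simp [hY_def, residualProd]
    rw [h6, integral_const]; simp
  have hdecay : ∀ n, ∫ ω, ‖Y n ω‖ ^ 2 ∂(ℙ : Measure Ω) ≤ (1 - C) ^ n * ‖x‖ ^ 2 := by
    intro n
    induction n with
    | zero => simp [hbase]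
    | succ n ih =>
      calc ∫ ω, ‖Y (n + 1) ω‖ ^ 2 ∂(ℙ : Measure Ω)
          ≤ (1 - C) * ∫ ω, ‖Y n ω‖ ^ 2 ∂(ℙ : Measure Ω) := hchain n
        _ ≤ (1 - C) * ((1 - C) ^ n * ‖x‖ ^ 2) :=
            mul_le_mul_of_nonneg_left ih (by linarith)
        _ = (1 - C) ^ (n + 1) * ‖x‖ ^ 2 := by ring
  -- summability and a.e. convergence
  have hYint : ∀ n, Integrable (fun ω => ‖Y n ω‖ ^ 2) ℙ := fun n =>
    hintb ((hYmeas n).norm.pow_const 2) (‖x‖ ^ 2) fun ω => by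
      rw [abs_of_nonneg (sq_nonneg _)]
      nlinarith [hYnorm n ω, norm_nonneg (Y n ω)]
  set f : ℕ → Ω → ENNReal := fun n ω => ENNReal.ofReal (‖Y n ω‖ ^ 2) with hf_def
  have hf_meas : ∀ n, Measurable (f n) := fun n => ((hYmeas n).norm.pow_const 2).ennreal_ofReal
  have hf_lint : ∀ n, ∫⁻ ω, f n ω ∂(ℙ : Measure Ω) ≤ ENNReal.ofReal ((1 - C) ^ n * ‖x‖ ^ 2) := by
    intro n
    rw [← ofReal_integral_eq_lintegral_ofReal (hYint n) (ae_of_all _ fun ω => sq_nonneg _)]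
    exact ENNReal.ofReal_le_ofReal (hdecay n)
  have hsum : ∫⁻ ω, ∑' n, f n ω ∂(ℙ : Measure Ω) < ⊤ := by
    rw [lintegral_tsum fun n => (hf_meas n).aemeasurable]
    have hsumm : Summable fun n => (1 - C) ^ n * ‖x‖ ^ 2 :=
      (summable_geometric_of_lt_one (by linarith) (by linarith)).mul_right _
    calc ∑' n, ∫⁻ ω, f n ω ∂(ℙ : Measure Ω)
        ≤ ∑' n, ENNReal.ofReal ((1 - C) ^ n * ‖x‖ ^ 2) := ENNReal.tsum_le_tsum hf_lint
      _ = ENNReal.ofReal (∑' n, (1 - C) ^ n * ‖x‖ ^ 2) :=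
          (ENNReal.ofReal_tsum_of_nonneg (fun n => mul_nonneg (pow_nonneg (by linarith) n) (sq_nonneg _)) hsumm).symm
      _ < ⊤ := ENNReal.ofReal_lt_top
  have hae : ∀ᵐ ω ∂(ℙ : Measure Ω), ∑' n, f n ω < ⊤ :=
    ae_lt_top (Measurable.ennreal_tsum hf_meas) hsum.ne
  filter_upwards [hae] with ω hω
  have hten : Tendsto (fun n => f n ω) atTop (nhds 0) :=
    ENNReal.tendsto_atTop_zero_of_tsum_ne_top hω.ne
  have htoReal : ∀ n, (f n ω).toReal = ‖Y n ω‖ ^ 2 := fun n =>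
    ENNReal.toReal_ofReal (sq_nonneg _)
  have hten2 : Tendsto (fun n => ‖Y n ω‖ ^ 2) atTop (nhds 0) := by
    have h1 : Tendsto (fun n => (f n ω).toReal) atTop (nhds ((0 : ENNReal).toReal)) :=
      (ENNReal.tendsto_toReal (by simp)).comp hten
    simpa [htoReal] using h1
  have hten3 : Tendsto (fun n => Y n ω) atTop (nhds 0) := by
    rw [tendsto_zero_iff_norm_tendsto_zero]
    have h2 : Tendsto (fun n => Real.sqrt (‖Y n ω‖ ^ 2)) atTop (nhds (Real.sqrt 0)) :=
      (Real.continuous_sqrt.tendsto _).comp hten2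
    simpa [Real.sqrt_sq (norm_nonneg _)] using h2
  have hfinal : Tendsto (fun n => x - Y n ω) atTop (nhds x) := by
    simpa using tendsto_const_nhds.sub hten3
  have heqf : (fun n => ∑ k ∈ Finset.Icc 1 n, Ψ k ω (residualProd Ψ ω (k - 1) x))
      = fun n => x - Y n ω := funext fun n => ase_telescope Ψ ω x n
  rw [heqf]
  exact hfinal
end

section
/- Let (Ω, 𝔽, ℙ) be a probability space, H a separable complex Hilbert space, and (Ψ_k)_{k∈ℕ} an i.i.d. sequence of strongly measurable random operators on H taking values in positive contractions, satisfying the coercivity condition 𝔼‖Ψ_k x‖² ≥ C‖x‖² for all x ∈ H with a constant 0 < C < 1. Then for every x ∈ H the limit L(x) = lim_{n→∞} 𝔼[ Σ_{k=1}^{n} ‖Ψ_k (I − Ψ_{k−1})⋯(I − Ψ₁) x‖² ] exists and satisfies the frame bounds C‖x‖² ≤ L(x) ≤ ‖x‖²; that is, the family {Ψ_n (I − Ψ_{n−1})⋯(I − Ψ₁)}_{n∈ℕ} is a random operator-valued frame for H. -/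
open MeasureTheory ProbabilityTheory Filter

section AuxOp

variable {H : Type*} [NormedAddCommGroup H] [InnerProductSpace ℂ H] [CompleteSpace H]

local notation "⟪" x ", " y "⟫" => @inner ℂ _ _ x y

open RCLike in
lemma posContraction_inner_le {T : H →L[ℂ] H} (h1 : T ≤ 1) (u : H) :
    re ⟪T u, u⟫ ≤ ‖u‖ ^ 2 := by
  have h := ((ContinuousLinearMap.le_def T 1).mp h1).inner_nonneg_left u
  simp only [ContinuousLinearMap.sub_apply, ContinuousLinearMap.one_apply, inner_sub_left,
    map_sub] at h
  replace h := (RCLike.nonneg_iff.mp h).1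
  rw [map_sub] at h
  rw [inner_self_eq_norm_sq] at h
  linarith

open RCLike in
lemma posContraction_sq_le {T : H →L[ℂ] H} (h0 : 0 ≤ T) (h1 : T ≤ 1) (v : H) :
    ‖T v‖ ^ 2 ≤ re ⟪T v, v⟫ := by
  have hpos := (ContinuousLinearMap.nonneg_iff_isPositive T).mp h0
  have hsym : (T : H →ₗ[ℂ] H).IsSymmetric :=
    ContinuousLinearMap.isSelfAdjoint_iff_isSymmetric.mp hpos.isSelfAdjoint
  have h := hpos.inner_nonneg_left (v - T v)
  have e1 : ⟪T (T v), v⟫ = ⟪T v, T v⟫ := hsym (T v) v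
  simp only [map_sub, inner_sub_left, inner_sub_right, e1] at h
  replace h := (RCLike.nonneg_iff.mp h).1
  simp only [map_sub, inner_self_eq_norm_sq] at h
  have h2 := posContraction_inner_le h1 (T v)
  linarith

open RCLike in
lemma posContraction_norm_sq_add {T : H →L[ℂ] H} (h0 : 0 ≤ T) (h1 : T ≤ 1) (v : H) :
    ‖T v‖ ^ 2 + ‖v - T v‖ ^ 2 ≤ ‖v‖ ^ 2 := by
  have h := posContraction_sq_le h0 h1 v
  have e : ‖v - T v‖ ^ 2 = ‖v‖ ^ 2 - 2 * re ⟪v, T v⟫ + ‖T v‖ ^ 2 := norm_sub_sq (𝕜 := ℂ) v (T v)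
  rw [inner_re_symm] at e
  linarith

end AuxOp

/-- For an i.i.d. sequence `(Ψ_k)` of strongly measurable random positive
contractions satisfying the coercivity condition with `0 < C < 1`, for every `x ∈ H` the limit
`L(x) = lim_n 𝔼[Σ_{k=1}^n ‖Ψ_k (I - Ψ_{k-1})⋯(I - Ψ₁) x‖²]` exists and satisfies the frame
bounds `C‖x‖² ≤ L(x) ≤ ‖x‖²`: the family `{Ψ_n (I - Ψ_{n-1})⋯(I - Ψ₁)}` is a random
operator-valued frame for `H`. -/
theorem random_operator_valued_frame
    {Ω : Type*} [MeasureSpace Ω] [IsProbabilityMeasure (ℙ : Measure Ω)]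
    {H : Type*} [NormedAddCommGroup H] [InnerProductSpace ℂ H]
    [CompleteSpace H] [TopologicalSpace.SeparableSpace H]
    [MeasurableSpace H] [BorelSpace H]
    (Ψ : ℕ → Ω → (H →L[ℂ] H))
    (hmeas : ∀ k, ∀ x : H, Measurable fun ω => Ψ k ω x)
    (hpos : ∀ k ω, 0 ≤ Ψ k ω) (hcontr : ∀ k ω, Ψ k ω ≤ 1)
    (hindep : iIndepFun (m := fun _ : ℕ => strongMS H) Ψ (ℙ : Measure Ω))
    (hident : ∀ i j : ℕ,
      @IdentDistrib Ω Ω (H →L[ℂ] H) _ _ (strongMS H) (Ψ i) (Ψ j) ℙ ℙ)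
    (C : ℝ) (hC0 : 0 < C) (hC1 : C < 1)
    (hcoer : ∀ k, ∀ x : H, C * ‖x‖ ^ 2 ≤ ∫ ω : Ω, ‖Ψ k ω x‖ ^ 2 ∂(ℙ : Measure Ω))
    (x : H) :
    ∃ L : ℝ,
      Tendsto
        (fun n => ∫ ω : Ω,
          (∑ k ∈ Finset.Icc 1 n, ‖Ψ k ω (residualProd Ψ ω (k - 1) x)‖ ^ 2) ∂(ℙ : Measure Ω))
        atTop (nhds L) ∧
      C * ‖x‖ ^ 2 ≤ L ∧ L ≤ ‖x‖ ^ 2 := by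
  haveI : SecondCountableTopology H := UniformSpace.secondCountable_of_separable H
  -- applying a random operator to a measurable vector field is measurable
  have happly : ∀ k (G : Ω → H), Measurable G → Measurable fun ω => Ψ k ω (G ω) := by
    intro k G hG
    have huncurry : Measurable (Function.uncurry fun (v : H) (ω : Ω) => Ψ k ω v) :=
      measurable_uncurry_of_continuous_of_measurable
        (fun ω => (Ψ k ω).continuous) (fun v => hmeas k v)
    exact huncurry.comp (hG.prodMk measurable_id)
  -- the vector fields ω ↦ R_k(ω) x
  set F : ℕ → Ω → H := fun k ω => residualProd Ψ ω k x with hF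
  have hFsucc : ∀ n ω, F (n + 1) ω = F n ω - Ψ (n + 1) ω (F n ω) := by
    intro n ω
    simp [hF, residualProd, ContinuousLinearMap.mul_apply, ContinuousLinearMap.sub_apply,
      ContinuousLinearMap.one_apply]
  have hFmeas : ∀ k, Measurable (F k) := by
    intro k
    induction k with
    | zero =>
      have : F 0 = fun _ => x := by
        funext ω; simp [hF, residualProd]
      rw [this]; exact measurable_const
    | succ n ih =>
      have : F (n + 1) = fun ω => F n ω - Ψ (n + 1) ω (F n ω) := funext (hFsucc n)
      rw [this]
      exact ih.sub (happly (n + 1) (F n) ih)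
  -- the partial sums
  set S : ℕ → Ω → ℝ := fun n ω => ∑ k ∈ Finset.Icc 1 n, ‖Ψ k ω (F (k - 1) ω)‖ ^ 2 with hS
  have hSmeas : ∀ n, Measurable (S n) :=
    fun n => Finset.measurable_sum _ fun k _ =>
      ((happly k (F (k - 1)) (hFmeas (k - 1))).norm.pow_const 2)
  have hSnonneg : ∀ n ω, 0 ≤ S n ω :=
    fun n ω => Finset.sum_nonneg fun k _ => by positivity
  -- pointwise key inequality
  have hptwise : ∀ ω n, S n ω + ‖F n ω‖ ^ 2 ≤ ‖x‖ ^ 2 := by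
    intro ω n
    induction n with
    | zero =>
      simp [hS, hF, residualProd]
    | succ n ih =>
      have hsum : S (n + 1) ω = S n ω + ‖Ψ (n + 1) ω (F n ω)‖ ^ 2 := by
        simp only [hS]
        rw [Finset.sum_Icc_succ_top (Nat.one_le_iff_ne_zero.mpr (Nat.succ_ne_zero n))]
        simp
      have hkey := posContraction_norm_sq_add (hpos (n + 1) ω) (hcontr (n + 1) ω) (F n ω)
      rw [hsum, hFsucc n ω]
      linarith
  have hSle : ∀ n ω, S n ω ≤ ‖x‖ ^ 2 := by
    intro n ω
    have := hptwise ω n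
    nlinarith [sq_nonneg ‖F n ω‖]
  have hSint : ∀ n, Integrable (S n) ℙ := by
    intro n
    refine ⟨(hSmeas n).aestronglyMeasurable, ?_⟩
    refine HasFiniteIntegral.of_bounded (C := ‖x‖ ^ 2) (ae_of_all _ fun ω => ?_)
    rw [Real.norm_eq_abs, abs_of_nonneg (hSnonneg n ω)]
    exact hSle n ω
  set a : ℕ → ℝ := fun n => ∫ ω, S n ω ∂(ℙ : Measure Ω) with ha
  have hmono : Monotone a := by
    intro n m hnm
    refine integral_mono (hSint n) (hSint m) fun ω => ?_
    exact Finset.sum_le_sum_of_subset_of_nonneg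
      (Finset.Icc_subset_Icc_right hnm) (fun k _ _ => by positivity)
  have hbdd : ∀ n, a n ≤ ‖x‖ ^ 2 := by
    intro n
    calc a n ≤ ∫ _ : Ω, ‖x‖ ^ 2 ∂(ℙ : Measure Ω) :=
          integral_mono (hSint n) (integrable_const _) (hSle n)
      _ = ‖x‖ ^ 2 := by simp
  have hbddAbove : BddAbove (Set.range a) := by
    refine ⟨‖x‖ ^ 2, ?_⟩
    rintro y ⟨n, rfl⟩
    exact hbdd n
  refine ⟨⨆ n, a n, ?_, ?_, ciSup_le hbdd⟩
  · exact tendsto_atTop_ciSup hmono hbddAbove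
  · have ha1 : a 1 = ∫ ω, ‖Ψ 1 ω x‖ ^ 2 ∂(ℙ : Measure Ω) := by
      refine integral_congr_ae (ae_of_all _ fun ω => ?_)
      simp [hS, hF, residualProd]
    calc C * ‖x‖ ^ 2 ≤ a 1 := by rw [ha1]; exact hcoer 1 x
      _ ≤ ⨆ n, a n := le_ciSup hbddAbove 1
end

section
/- Let (Ω, 𝔽, ℙ) be a probability space, H a separable complex Hilbert space, and (Ψ_k)_{k∈ℕ} an i.i.d. sequence of strongly measurable random operators on H taking values in selfadjoint (orthogonal) projections, satisfying the coercivity condition 𝔼‖Ψ_k x‖² ≥ C‖x‖² for all x ∈ H with a constant 0 < C < 1. Then for every x ∈ H, lim_{n→∞} 𝔼[ Σ_{k=1}^{n} ‖Ψ_k (I − Ψ_{k−1})⋯(I − Ψ₁) x‖² ] = ‖x‖²; that is, the family {Ψ_n (I − Ψ_{n−1})⋯(I − Ψ₁)}_{n∈ℕ} is a random operator-valued Parseval frame for H. -/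
open MeasureTheory ProbabilityTheory Filter

set_option linter.unusedSectionVars false
set_option linter.unusedVariables false
section Aux

variable {Ω H : Type*} [NormedAddCommGroup H] [InnerProductSpace ℂ H]
  [CompleteSpace H] [MeasurableSpace H] [BorelSpace H]

local notation "⟪" x ", " y "⟫" => @inner ℂ _ _ x y

lemma proj_pythagoras (P : H →L[ℂ] H) (hP : IsSelfAdjoint P) (h2 : P * P = P) (y : H) :
    ‖P y‖ ^ 2 + ‖y - P y‖ ^ 2 = ‖y‖ ^ 2 := by
  have hsymm := ContinuousLinearMap.isSelfAdjoint_iff_isSymmetric.mp hP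
  have hPP : P (P y) = P y := by
    have := ContinuousLinearMap.ext_iff.mp h2 y
    simpa [ContinuousLinearMap.mul_apply] using this
  have horth : ⟪P y, y - P y⟫ = 0 := by
    have h1 : ⟪P (P y), y⟫ = ⟪P y, P y⟫ := hsymm (P y) y
    rw [hPP] at h1
    rw [inner_sub_right, h1, sub_self]
  have hsum : ‖P y + (y - P y)‖ ^ 2 = ‖P y‖ ^ 2 + 2 * (RCLike.re ⟪P y, y - P y⟫) + ‖y - P y‖ ^ 2 :=
    @norm_add_sq ℂ _ _ _ _ _ _
  rw [horth] at hsum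
  simp only [map_zero, mul_zero, add_zero] at hsum
  rw [add_sub_cancel] at hsum
  linarith

lemma proj_contraction (P : H →L[ℂ] H) (hP : IsSelfAdjoint P) (h2 : P * P = P) (y : H) :
    ‖P y‖ ≤ ‖y‖ := by
  have h := proj_pythagoras P hP h2 y
  nlinarith [norm_nonneg (P y), norm_nonneg y, sq_nonneg ‖y - P y‖]

lemma measurable_apply_simple [TopologicalSpace.SeparableSpace H] {m : MeasurableSpace Ω} (T : Ω → H →L[ℂ] H)
    (hT : ∀ y : H, Measurable[m] fun ω => T ω y) (s : @SimpleFunc Ω m H) :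
    Measurable[m] fun ω => T ω (s ω) := by
  haveI : SecondCountableTopology H := UniformSpace.secondCountable_of_separable H
  classical
  induction s using SimpleFunc.induction with
  | @const c A hA =>
    have heq : (fun ω => T ω ((SimpleFunc.piecewise A hA (SimpleFunc.const Ω c)
        (SimpleFunc.const Ω 0)) ω)) = A.piecewise (fun ω => T ω c) (fun ω => T ω 0) := by
      funext ω
      by_cases hω : ω ∈ A <;>
        simp [SimpleFunc.piecewise_apply, Set.piecewise, hω]
    rw [heq]
    exact Measurable.piecewise hA (hT c) (hT 0)
  | @add f g _ hf hg =>
    have heq : (fun ω => T ω ((f + g) ω)) = fun ω => T ω (f ω) + T ω (g ω) := by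
      funext ω; simp [map_add]
    rw [heq]
    exact hf.add hg

lemma measurable_apply_comp [TopologicalSpace.SeparableSpace H]
    {m : MeasurableSpace Ω} (T : Ω → H →L[ℂ] H)
    (hT : ∀ y : H, Measurable[m] fun ω => T ω y) {Z : Ω → H} (hZ : Measurable[m] Z) :
    Measurable[m] fun ω => T ω (Z ω) := by
  haveI : SecondCountableTopology H := UniformSpace.secondCountable_of_separable H
  have hZs : @StronglyMeasurable Ω H _ m Z := hZ.stronglyMeasurable
  refine measurable_of_tendsto_metrizable
    (f := fun n ω => T ω (hZs.approx n ω)) (fun n => measurable_apply_simple T hT _) ?_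
  rw [tendsto_pi_nhds]
  intro ω
  exact ((T ω).continuous.tendsto _).comp (hZs.tendsto_approx ω)

lemma ProbabilityTheory.Indep.mono' {mΩ : MeasurableSpace Ω} {μ : Measure Ω}
    {m1 m2 m1' m2' : MeasurableSpace Ω} (h : Indep m1 m2 μ)
    (h1 : m1' ≤ m1) (h2 : m2' ≤ m2) : Indep m1' m2' μ :=
  fun t1 t2 ht1 ht2 => h t1 t2 (h1 _ ht1) (h2 _ ht2)

end Aux

section Key

variable {Ω H : Type*} [NormedAddCommGroup H] [InnerProductSpace ℂ H]
  [CompleteSpace H] [TopologicalSpace.SeparableSpace H] [MeasurableSpace H] [BorelSpace H]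

lemma measurable_norm_sq {m : MeasurableSpace Ω} {f : Ω → H} (hf : Measurable[m] f) :
    Measurable[m] fun ω => ‖f ω‖ ^ 2 :=
  Measurable.pow_const (Measurable.norm hf) 2

lemma eval_measurable_comap (Ψn : Ω → H →L[ℂ] H) (y : H) :
    Measurable[(strongMS H).comap Ψn] fun ω => Ψn ω y := by
  rw [measurable_iff_comap_le, BorelSpace.measurable_eq (α := H)]
  have h : MeasurableSpace.comap (fun ω => Ψn ω y) (borel H)
      = MeasurableSpace.comap Ψn ((borel H).comap (fun T : H →L[ℂ] H => T y)) := by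
    rw [MeasurableSpace.comap_comp]; rfl
  rw [h]
  exact MeasurableSpace.comap_mono (le_iSup (fun x : H => (borel H).comap fun T : H →L[ℂ] H => T x) y)

lemma key_ineq_s11 {m2 : MeasurableSpace Ω} {mΩ : MeasurableSpace Ω} (μ : Measure Ω)
    [IsProbabilityMeasure μ]
    (Ψn : Ω → H →L[ℂ] H)
    (hcontr : ∀ ω y, ‖Ψn ω y‖ ≤ ‖y‖)
    (C : ℝ) (hC0 : 0 ≤ C)
    (hcoer : ∀ y : H, C * ‖y‖ ^ 2 ≤ ∫ ω, ‖Ψn ω y‖ ^ 2 ∂μ)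
    (hm2 : m2 ≤ mΩ)
    (hm1 : (strongMS H).comap Ψn ≤ mΩ)
    (hInd : Indep ((strongMS H).comap Ψn) m2 μ)
    (Y : Ω → H) (hY : Measurable[m2] Y) (B : ℝ) (hB0 : 0 ≤ B) (hB : ∀ ω, ‖Y ω‖ ≤ B) :
    C * ∫ ω, ‖Y ω‖ ^ 2 ∂μ ≤ ∫ ω, ‖Ψn ω (Y ω)‖ ^ 2 ∂μ := by
  haveI : SecondCountableTopology H := UniformSpace.secondCountable_of_separable H
  have hevalm : ∀ y : H, Measurable[mΩ] fun ω => Ψn ω y :=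
    fun y => (eval_measurable_comap Ψn y).mono hm1 le_rfl
  have hintb : ∀ (f : Ω → ℝ) (b : ℝ), AEStronglyMeasurable f μ → (∀ ω, ‖f ω‖ ≤ b) →
      Integrable f μ :=
    fun f b hf hb => Integrable.mono' (integrable_const b) hf (ae_of_all _ hb)
  -- Step 2 : the simple-function case
  have step2 : ∀ s : @SimpleFunc Ω m2 H,
      C * ∫ ω, ‖s ω‖ ^ 2 ∂μ ≤ ∫ ω, ‖Ψn ω (s ω)‖ ^ 2 ∂μ := by
    intro s
    induction s using SimpleFunc.induction with
    | @const c A hA =>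
      have hAamb : MeasurableSet[mΩ] A := hm2 _ hA
      have h₁ : (fun ω => ‖(@SimpleFunc.piecewise Ω H m2 A hA (@SimpleFunc.const Ω H m2 c)
          (@SimpleFunc.const Ω H m2 0)) ω‖ ^ 2) = A.indicator (fun _ => ‖c‖ ^ 2) := by
        funext ω
        by_cases hω : ω ∈ A <;> simp [SimpleFunc.piecewise_apply, hω, Set.indicator]
      have h₂ : (fun ω => ‖Ψn ω ((@SimpleFunc.piecewise Ω H m2 A hA (@SimpleFunc.const Ω H m2 c)
          (@SimpleFunc.const Ω H m2 0)) ω)‖ ^ 2)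
          = fun ω => ‖Ψn ω c‖ ^ 2 * A.indicator (fun _ => (1 : ℝ)) ω := by
        funext ω
        by_cases hω : ω ∈ A <;> simp [SimpleFunc.piecewise_apply, hω, Set.indicator, map_zero]
      rw [h₁, h₂]
      have hXm1 : Measurable[(strongMS H).comap Ψn] fun ω => ‖Ψn ω c‖ ^ 2 :=
        measurable_norm_sq (eval_measurable_comap Ψn c)
      have hgm2 : Measurable[m2] (A.indicator fun _ => (1 : ℝ)) :=
        measurable_const.indicator hA
      have hIndf : IndepFun (fun ω => ‖Ψn ω c‖ ^ 2) (A.indicator fun _ => (1 : ℝ)) μ := by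
        exact hInd.mono' (measurable_iff_comap_le.mp hXm1) (measurable_iff_comap_le.mp hgm2)
      have hXamb : AEStronglyMeasurable (fun ω => ‖Ψn ω c‖ ^ 2) μ :=
        (((hevalm c).norm).pow_const 2).aestronglyMeasurable
      have hgamb : AEStronglyMeasurable (A.indicator fun _ => (1 : ℝ)) μ :=
        (measurable_const.indicator hAamb).aestronglyMeasurable
      have hmul := IndepFun.integral_fun_mul_eq_mul_integral hIndf hXamb hgamb
      rw [hmul]
      rw [integral_indicator_const (‖c‖ ^ 2) hAamb, integral_indicator_const (1 : ℝ) hAamb]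
      have h3 := hcoer c
      have h4 : (0 : ℝ) ≤ μ.real A := measureReal_nonneg
      simp only [smul_eq_mul, mul_one]
      nlinarith [h3, h4]
    | @add f g hdisj hf hg =>
      have hzero : ∀ ω, f ω = 0 ∨ g ω = 0 := by
        intro ω
        by_cases hfo : f ω = 0
        · exact Or.inl hfo
        · refine Or.inr ?_
          by_contra hgo
          exact (Set.disjoint_left.mp hdisj (Function.mem_support.mpr hfo))
            (Function.mem_support.mpr hgo)
      have e1 : (fun ω => ‖(⇑(f + g)) ω‖ ^ 2) = fun ω => ‖f ω‖ ^ 2 + ‖g ω‖ ^ 2 := by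
        funext ω
        rcases hzero ω with h | h <;> simp [SimpleFunc.coe_add, h]
      have e2 : (fun ω => ‖Ψn ω ((⇑(f + g)) ω)‖ ^ 2)
          = fun ω => ‖Ψn ω (f ω)‖ ^ 2 + ‖Ψn ω (g ω)‖ ^ 2 := by
        funext ω
        rcases hzero ω with h | h <;> simp [SimpleFunc.coe_add, h, map_zero]
      obtain ⟨Bf, hBf⟩ := @SimpleFunc.exists_forall_norm_le Ω H m2 _ f
      obtain ⟨Bg, hBg⟩ := @SimpleFunc.exists_forall_norm_le Ω H m2 _ g
      have hBf' : ∀ x, ‖f x‖ ≤ max Bf 0 := fun x => le_trans (hBf x) (le_max_left _ _)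
      have hBg' : ∀ x, ‖g x‖ ≤ max Bg 0 := fun x => le_trans (hBg x) (le_max_left _ _)
      have hmf : Measurable[mΩ] (⇑f) := (@SimpleFunc.measurable Ω H m2 _ f).mono hm2 le_rfl
      have hmg : Measurable[mΩ] (⇑g) := (@SimpleFunc.measurable Ω H m2 _ g).mono hm2 le_rfl
      have hMf : Measurable[mΩ] fun ω => ‖Ψn ω (f ω)‖ ^ 2 :=
        ((measurable_apply_comp Ψn hevalm hmf).norm).pow_const 2
      have hMg : Measurable[mΩ] fun ω => ‖Ψn ω (g ω)‖ ^ 2 :=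
        ((measurable_apply_comp Ψn hevalm hmg).norm).pow_const 2
      have sqb : ∀ (z : H) (b : ℝ), ‖z‖ ≤ b → ‖(‖z‖ ^ 2)‖ ≤ b ^ 2 := by
        intro z b hz
        rw [Real.norm_eq_abs, abs_of_nonneg (by positivity)]
        exact pow_le_pow_left₀ (norm_nonneg z) hz 2
      have if1 : Integrable (fun ω => ‖f ω‖ ^ 2) μ :=
        hintb _ ((max Bf 0) ^ 2) ((hmf.norm.pow_const 2).aestronglyMeasurable)
          (fun ω => sqb _ _ (hBf' ω))
      have ig1 : Integrable (fun ω => ‖g ω‖ ^ 2) μ :=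
        hintb _ ((max Bg 0) ^ 2) ((hmg.norm.pow_const 2).aestronglyMeasurable)
          (fun ω => sqb _ _ (hBg' ω))
      have if2 : Integrable (fun ω => ‖Ψn ω (f ω)‖ ^ 2) μ :=
        hintb _ ((max Bf 0) ^ 2) hMf.aestronglyMeasurable
          (fun ω => sqb _ _ (le_trans (hcontr ω _) (hBf' ω)))
      have ig2 : Integrable (fun ω => ‖Ψn ω (g ω)‖ ^ 2) μ :=
        hintb _ ((max Bg 0) ^ 2) hMg.aestronglyMeasurable
          (fun ω => sqb _ _ (le_trans (hcontr ω _) (hBg' ω)))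
      rw [e1, e2, integral_add if1 ig1, integral_add if2 ig2, mul_add]
      exact add_le_add hf hg
  -- Step 3 : pass to the limit
  have hYsm : @StronglyMeasurable Ω H _ m2 Y := hY.stronglyMeasurable
  set s : ℕ → @SimpleFunc Ω m2 H := fun n => hYsm.approxBounded B n with hs
  have hsb : ∀ n ω, ‖s n ω‖ ≤ B := fun n ω => hYsm.norm_approxBounded_le hB0 n ω
  have hst : ∀ ω, Tendsto (fun n => s n ω) atTop (nhds (Y ω)) :=
    fun ω => hYsm.tendsto_approxBounded_of_norm_le (hB ω)
  have hmsn : ∀ n, Measurable[mΩ] (⇑(s n)) := fun n => (@SimpleFunc.measurable Ω H m2 _ (s n)).mono hm2 le_rfl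
  have hYamb : Measurable[mΩ] Y := hY.mono hm2 le_rfl
  have lim1 : Tendsto (fun n => ∫ ω, ‖s n ω‖ ^ 2 ∂μ) atTop (nhds (∫ ω, ‖Y ω‖ ^ 2 ∂μ)) := by
    refine tendsto_integral_of_dominated_convergence (fun _ => B ^ 2)
      (fun n => ((hmsn n).norm.pow_const 2).aestronglyMeasurable)
      (integrable_const _) (fun n => ae_of_all _ fun ω => ?_) (ae_of_all _ fun ω => ?_)
    · rw [Real.norm_eq_abs, abs_of_nonneg (by positivity)]
      exact pow_le_pow_left₀ (norm_nonneg _) (hsb n ω) 2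
    · exact ((continuous_norm.tendsto _).comp (hst ω)).pow 2
  have lim2 : Tendsto (fun n => ∫ ω, ‖Ψn ω (s n ω)‖ ^ 2 ∂μ) atTop
      (nhds (∫ ω, ‖Ψn ω (Y ω)‖ ^ 2 ∂μ)) := by
    refine tendsto_integral_of_dominated_convergence (fun _ => B ^ 2)
      (fun n => (((measurable_apply_comp Ψn hevalm (hmsn n)).norm).pow_const
        2).aestronglyMeasurable)
      (integrable_const _) (fun n => ae_of_all _ fun ω => ?_) (ae_of_all _ fun ω => ?_)
    · rw [Real.norm_eq_abs, abs_of_nonneg (by positivity)]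
      exact pow_le_pow_left₀ (norm_nonneg _) (le_trans (hcontr ω _) (hsb n ω)) 2
    · have hc : Tendsto (fun n => Ψn ω (s n ω)) atTop (nhds (Ψn ω (Y ω))) :=
        ((Ψn ω).continuous.tendsto _).comp (hst ω)
      exact ((continuous_norm.tendsto _).comp hc).pow 2
  exact le_of_tendsto_of_tendsto' (lim1.const_mul C) lim2 (fun n => step2 (s n))

end Key

/-- For an i.i.d. sequence `(Ψ_k)` of strongly measurable random selfadjoint
projections satisfying the coercivity condition with `0 < C < 1`, for every `x ∈ H`,
`lim_n 𝔼[Σ_{k=1}^n ‖Ψ_k (I - Ψ_{k-1})⋯(I - Ψ₁) x‖²] = ‖x‖²`: the family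
`{Ψ_n (I - Ψ_{n-1})⋯(I - Ψ₁)}` is a random operator-valued Parseval frame for `H`. -/
theorem random_operator_valued_parseval_frame
    {Ω : Type*} [MeasureSpace Ω] [IsProbabilityMeasure (ℙ : Measure Ω)]
    {H : Type*} [NormedAddCommGroup H] [InnerProductSpace ℂ H]
    [CompleteSpace H] [TopologicalSpace.SeparableSpace H]
    [MeasurableSpace H] [BorelSpace H]
    (Ψ : ℕ → Ω → (H →L[ℂ] H))
    (hmeas : ∀ k, ∀ x : H, Measurable fun ω => Ψ k ω x)
    (hsa : ∀ k ω, IsSelfAdjoint (Ψ k ω)) (hproj : ∀ k ω, Ψ k ω * Ψ k ω = Ψ k ω)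
    (hindep : iIndepFun (m := fun _ : ℕ => strongMS H) Ψ (ℙ : Measure Ω))
    (hident : ∀ i j : ℕ,
      @IdentDistrib Ω Ω (H →L[ℂ] H) _ _ (strongMS H) (Ψ i) (Ψ j) ℙ ℙ)
    (C : ℝ) (hC0 : 0 < C) (hC1 : C < 1)
    (hcoer : ∀ k, ∀ x : H, C * ‖x‖ ^ 2 ≤ ∫ ω : Ω, ‖Ψ k ω x‖ ^ 2 ∂(ℙ : Measure Ω))
    (x : H) :
    Tendsto
      (fun n => ∫ ω : Ω,
        (∑ k ∈ Finset.Icc 1 n, ‖Ψ k ω (residualProd Ψ ω (k - 1) x)‖ ^ 2) ∂(ℙ : Measure Ω))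
      atTop (nhds (‖x‖ ^ 2)) := by

  haveI : SecondCountableTopology H := UniformSpace.secondCountable_of_separable H
  -- pointwise identities
  have hRapp : ∀ (ω : Ω) (n : ℕ), residualProd Ψ ω (n + 1) x
      = residualProd Ψ ω n x - Ψ (n + 1) ω (residualProd Ψ ω n x) := by
    intro ω n
    simp [residualProd, ContinuousLinearMap.mul_apply, ContinuousLinearMap.sub_apply,
      ContinuousLinearMap.one_apply]
  have pyth : ∀ (ω : Ω) (n : ℕ), ‖Ψ (n + 1) ω (residualProd Ψ ω n x)‖ ^ 2
      + ‖residualProd Ψ ω (n + 1) x‖ ^ 2 = ‖residualProd Ψ ω n x‖ ^ 2 := by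
    intro ω n
    rw [hRapp ω n]
    exact proj_pythagoras _ (hsa _ _) (hproj _ _) _
  have hRb : ∀ (ω : Ω) (n : ℕ), ‖residualProd Ψ ω n x‖ ≤ ‖x‖ := by
    intro ω n
    induction n with
    | zero => simp [residualProd]
    | succ n ih =>
      have h := pyth ω n
      nlinarith [norm_nonneg (residualProd Ψ ω (n + 1) x),
        norm_nonneg (Ψ (n + 1) ω (residualProd Ψ ω n x)),
        norm_nonneg (residualProd Ψ ω n x), norm_nonneg x]
  have hcontr : ∀ k (ω : Ω) (y : H), ‖Ψ k ω y‖ ≤ ‖y‖ :=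
    fun k ω y => proj_contraction _ (hsa k ω) (hproj k ω) y
  -- σ-algebras
  have hm1 : ∀ k, (strongMS H).comap (Ψ k) ≤ (inferInstance : MeasurableSpace Ω) := by
    intro k
    rw [strongMS, MeasurableSpace.comap_iSup]
    refine iSup_le fun y => ?_
    have h : (MeasurableSpace.comap (Ψ k) ((borel H).comap fun T : H →L[ℂ] H => T y))
        = MeasurableSpace.comap (fun ω => Ψ k ω y) (borel H) := by
      rw [MeasurableSpace.comap_comp]; rfl
    rw [h, ← BorelSpace.measurable_eq (α := H)]
    exact measurable_iff_comap_le.mp (hmeas k y)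
  set G : ℕ → MeasurableSpace Ω :=
    fun n => ⨆ i ∈ Set.Icc 1 n, (strongMS H).comap (Ψ i) with hG
  have hGle : ∀ n, G n ≤ (inferInstance : MeasurableSpace Ω) :=
    fun n => iSup₂_le fun i _ => hm1 i
  have hGmono : ∀ {n m : ℕ}, n ≤ m → G n ≤ G m := by
    intro n m hnm
    exact biSup_mono fun i hi => Set.mem_of_mem_of_subset hi (Set.Icc_subset_Icc_right hnm)
  have hGeval : ∀ (n i : ℕ), i ∈ Set.Icc 1 n → ∀ y : H,
      Measurable[G n] fun ω => Ψ i ω y := by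
    intro n i hi y
    exact (eval_measurable_comap (Ψ i) y).mono
      (le_biSup (fun i => (strongMS H).comap (Ψ i)) hi) le_rfl
  have hRmeas : ∀ n, Measurable[G n] fun ω => residualProd Ψ ω n x := by
    intro n
    induction n with
    | zero =>
      have : (fun ω : Ω => residualProd Ψ ω 0 x) = fun _ => x := by
        funext ω; simp [residualProd]
      rw [this]; exact measurable_const
    | succ n ih =>
      have hZ : Measurable[G (n + 1)] fun ω => residualProd Ψ ω n x :=
        ih.mono (hGmono (Nat.le_succ n)) le_rfl
      have happ : Measurable[G (n + 1)] fun ω => Ψ (n + 1) ω (residualProd Ψ ω n x) :=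
        measurable_apply_comp (m := G (n + 1)) (Ψ (n + 1))
          (hGeval (n + 1) (n + 1) (by simp) ) hZ
      have heq : (fun ω : Ω => residualProd Ψ ω (n + 1) x)
          = fun ω => residualProd Ψ ω n x - Ψ (n + 1) ω (residualProd Ψ ω n x) :=
        funext fun ω => hRapp ω n
      rw [heq]
      exact hZ.sub happ
  have hRamb : ∀ n, Measurable fun ω => residualProd Ψ ω n x :=
    fun n => (hRmeas n).mono (hGle n) le_rfl
  -- independence
  have hIndep : ∀ n, Indep ((strongMS H).comap (Ψ (n + 1))) (G n) ℙ := by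
    intro n
    have hii : iIndep (fun i => (strongMS H).comap (Ψ i)) (ℙ : Measure Ω) := hindep
    have h := indep_iSup_of_disjoint (m := fun i => (strongMS H).comap (Ψ i)) hm1 hii
      (S := {n + 1}) (T := Set.Icc 1 n)
      (by
        rw [Set.disjoint_left]
        intro a ha ha'
        simp only [Set.mem_singleton_iff] at ha
        simp only [Set.mem_Icc] at ha'
        omega)
    rwa [iSup_singleton] at h
  -- integrability
  have hintb : ∀ (f : Ω → ℝ) (b : ℝ), AEStronglyMeasurable f ℙ → (∀ ω, ‖f ω‖ ≤ b) →
      Integrable f ℙ :=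
    fun f b hf hb => Integrable.mono' (integrable_const b) hf (ae_of_all _ hb)
  have sqb : ∀ (z : H) (b : ℝ), ‖z‖ ≤ b → ‖(‖z‖ ^ 2)‖ ≤ b ^ 2 := by
    intro z b hz
    rw [Real.norm_eq_abs, abs_of_nonneg (by positivity)]
    exact pow_le_pow_left₀ (norm_nonneg z) hz 2
  have hintR : ∀ n, Integrable (fun ω => ‖residualProd Ψ ω n x‖ ^ 2) ℙ :=
    fun n => hintb _ (‖x‖ ^ 2) ((hRamb n).norm.pow_const 2).aestronglyMeasurable
      (fun ω => sqb _ _ (hRb ω n))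
  have hmΨR : ∀ n, Measurable fun ω => Ψ (n + 1) ω (residualProd Ψ ω n x) :=
    fun n => measurable_apply_comp (Ψ (n + 1)) (hmeas (n + 1)) (hRamb n)
  have hintΨR : ∀ n, Integrable (fun ω => ‖Ψ (n + 1) ω (residualProd Ψ ω n x)‖ ^ 2) ℙ :=
    fun n => hintb _ (‖x‖ ^ 2) ((hmΨR n).norm.pow_const 2).aestronglyMeasurable
      (fun ω => sqb _ _ (le_trans (hcontr _ ω _) (hRb ω n)))
  -- the recursion
  have hstep : ∀ n, ∫ ω, ‖residualProd Ψ ω (n + 1) x‖ ^ 2 ∂(ℙ : Measure Ω)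
      ≤ (1 - C) * ∫ ω, ‖residualProd Ψ ω n x‖ ^ 2 ∂(ℙ : Measure Ω) := by
    intro n
    have hkey := key_ineq_s11 (ℙ : Measure Ω) (Ψ (n + 1)) (hcontr (n + 1)) C hC0.le
      (hcoer (n + 1)) (hGle n) (hm1 (n + 1)) (hIndep n)
      (fun ω => residualProd Ψ ω n x) (hRmeas n) ‖x‖ (norm_nonneg x) (fun ω => hRb ω n)
    have heq : (fun ω : Ω => ‖residualProd Ψ ω (n + 1) x‖ ^ 2)
        = fun ω => ‖residualProd Ψ ω n x‖ ^ 2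
          - ‖Ψ (n + 1) ω (residualProd Ψ ω n x)‖ ^ 2 := by
      funext ω
      have := pyth ω n
      linarith
    rw [heq, integral_sub (hintR n) (hintΨR n)]
    nlinarith [hkey]
  have hE0 : ∫ ω, ‖residualProd Ψ ω 0 x‖ ^ 2 ∂(ℙ : Measure Ω) = ‖x‖ ^ 2 := by
    have : (fun ω : Ω => ‖residualProd Ψ ω 0 x‖ ^ 2) = fun _ => ‖x‖ ^ 2 := by
      funext ω; simp [residualProd]
    rw [this, integral_const]
    simp
  have hEnonneg : ∀ n, 0 ≤ ∫ ω, ‖residualProd Ψ ω n x‖ ^ 2 ∂(ℙ : Measure Ω) :=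
    fun n => integral_nonneg fun ω => by positivity
  have hEbound : ∀ n, ∫ ω, ‖residualProd Ψ ω n x‖ ^ 2 ∂(ℙ : Measure Ω)
      ≤ (1 - C) ^ n * ‖x‖ ^ 2 := by
    intro n
    induction n with
    | zero => simp [hE0]
    | succ n ih =>
      calc ∫ ω, ‖residualProd Ψ ω (n + 1) x‖ ^ 2 ∂(ℙ : Measure Ω)
          ≤ (1 - C) * ∫ ω, ‖residualProd Ψ ω n x‖ ^ 2 ∂(ℙ : Measure Ω) := hstep n
        _ ≤ (1 - C) * ((1 - C) ^ n * ‖x‖ ^ 2) :=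
            mul_le_mul_of_nonneg_left ih (by linarith)
        _ = (1 - C) ^ (n + 1) * ‖x‖ ^ 2 := by ring
  -- telescoping
  have hsum : ∀ (n : ℕ) (ω : Ω), (∑ k ∈ Finset.Icc 1 n, ‖Ψ k ω (residualProd Ψ ω (k - 1) x)‖ ^ 2)
      = ‖x‖ ^ 2 - ‖residualProd Ψ ω n x‖ ^ 2 := by
    intro n ω
    induction n with
    | zero => simp [residualProd]
    | succ n ih =>
      rw [Finset.sum_Icc_succ_top (by omega : 1 ≤ n + 1), ih]
      have := pyth ω n
      simp only [Nat.add_sub_cancel]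
      linarith
  have hInt : ∀ n, ∫ ω, (∑ k ∈ Finset.Icc 1 n, ‖Ψ k ω (residualProd Ψ ω (k - 1) x)‖ ^ 2)
        ∂(ℙ : Measure Ω)
      = ‖x‖ ^ 2 - ∫ ω, ‖residualProd Ψ ω n x‖ ^ 2 ∂(ℙ : Measure Ω) := by
    intro n
    have heq : (fun ω : Ω => ∑ k ∈ Finset.Icc 1 n, ‖Ψ k ω (residualProd Ψ ω (k - 1) x)‖ ^ 2)
        = fun ω => ‖x‖ ^ 2 - ‖residualProd Ψ ω n x‖ ^ 2 := funext fun ω => hsum n ω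
    rw [heq, integral_sub (integrable_const _) (hintR n), integral_const]
    simp
  have hlim : Tendsto (fun n => ∫ ω, ‖residualProd Ψ ω n x‖ ^ 2 ∂(ℙ : Measure Ω))
      atTop (nhds 0) := by
    have h0 : Tendsto (fun n : ℕ => (1 - C) ^ n * ‖x‖ ^ 2) atTop (nhds 0) := by
      have h1 := tendsto_pow_atTop_nhds_zero_of_lt_one (by linarith : (0:ℝ) ≤ 1 - C)
        (by linarith : (1:ℝ) - C < 1)
      simpa using h1.mul_const (‖x‖ ^ 2)
    exact squeeze_zero hEnonneg hEbound h0
  have hfinal : (fun n => ∫ ω : Ω,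
      (∑ k ∈ Finset.Icc 1 n, ‖Ψ k ω (residualProd Ψ ω (k - 1) x)‖ ^ 2) ∂(ℙ : Measure Ω))
      = fun n => ‖x‖ ^ 2 - ∫ ω, ‖residualProd Ψ ω n x‖ ^ 2 ∂(ℙ : Measure Ω) :=
    funext hInt
  rw [hfinal]
  have := (tendsto_const_nhds (x := ‖x‖ ^ 2) (f := atTop (α := ℕ))).sub hlim
  simpa using this
end

section
/- Let H be a separable complex Hilbert space and {(W_i, v_i)}_{i∈ℕ} a fusion frame for H with lower bound A > 0, i.e. A‖x‖² ≤ Σ_i v_i² ‖P_{W_i} x‖² ≤ B‖x‖² for all x ∈ H, where P_{W_i} is the orthogonal projection onto the closed subspace W_i. Assume Σ_i v_i² = 1, and let (Ψ_k)_{k∈ℕ} be an i.i.d. sequence of random operators with ℙ(Ψ_k = P_{W_i}) = v_i² for each i. Set T_k = Ψ_k (I − Ψ_{k−1})⋯(I − Ψ₁). Then for every x ∈ H, almost surely x = lim_{n→∞} Σ_{k=1}^{n} T_k x. -/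
open MeasureTheory ProbabilityTheory Filter

/-- The orthogonal projection onto a closed subspace `W`, viewed as an operator `H → H`. -/
noncomputable def projL {H : Type*} [NormedAddCommGroup H] [InnerProductSpace ℂ H]
    (W : Submodule ℂ H) [CompleteSpace W] : H →L[ℂ] H :=
  W.subtypeL ∘L W.orthogonalProjectionOnto

section Helpers

variable {H : Type*} [NormedAddCommGroup H] [InnerProductSpace ℂ H]

/-- Pythagoras for the orthogonal projection. -/
lemma projL_norm_identity (W' : Submodule ℂ H) [CompleteSpace W'] (y : H) :
    ‖y - projL W' y‖ ^ 2 + ‖projL W' y‖ ^ 2 = ‖y‖ ^ 2 := by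
  have hmem : y - projL W' y ∈ W'ᗮ := by
    exact W'.sub_starProjection_mem_orthogonal y
  have hmem' : projL W' y ∈ W' := by
    simp [projL]
  have hinner : (inner ℂ (projL W' y) (y - projL W' y) : ℂ) = 0 :=
    Submodule.inner_right_of_mem_orthogonal hmem' hmem
  have hsum : projL W' y + (y - projL W' y) = y := by abel
  have h := norm_add_sq (𝕜 := ℂ) (projL W' y) (y - projL W' y)
  rw [hsum, hinner] at h
  simp only [map_zero] at h
  linarith

variable [MeasurableSpace H] [BorelSpace H]

/-- Point evaluations are measurable for the strong σ-algebra. -/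
lemma measurable_strong_eval (z : H) :
    Measurable[strongMS H] (fun T : H →L[ℂ] H => T z) := by
  intro s hs
  have h : (borel H).comap (fun T : H →L[ℂ] H => T z) ≤ strongMS H :=
    le_iSup (fun w : H => (borel H).comap fun T : H →L[ℂ] H => T w) z
  exact h _ ⟨s, by rwa [← BorelSpace.measurable_eq (α := H)], rfl⟩

/-- Singletons are measurable for the strong σ-algebra when `H` is separable. -/
lemma strongMS_measurableSet_singleton [TopologicalSpace.SeparableSpace H]
    (P : H →L[ℂ] H) : MeasurableSet[strongMS H] {P} := by
  obtain ⟨D, hDc, hDd⟩ := TopologicalSpace.exists_countable_dense H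
  have hset : ({P} : Set (H →L[ℂ] H)) = ⋂ z ∈ D, (fun T : H →L[ℂ] H => T z) ⁻¹' {P z} := by
    ext T
    simp only [Set.mem_singleton_iff, Set.mem_iInter, Set.mem_preimage]
    constructor
    · rintro rfl z _; rfl
    · intro h
      exact DFunLike.coe_injective
        (Continuous.ext_on hDd T.continuous P.continuous fun z hz => h z hz)
  rw [hset]
  exact MeasurableSet.biInter hDc fun z _ =>
    measurable_strong_eval z (measurableSet_singleton _)

/-- Indicator of a measurable set is measurable, with an explicit σ-algebra. -/
lemma measurable_indicator_one' {α : Type*} [m : MeasurableSpace α] {s : Set α}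
    (hs : MeasurableSet[m] s) :
    Measurable[m] (s.indicator (1 : α → ENNReal)) :=
  measurable_one.indicator hs

end Helpers

/-- Let `{(W_i, v_i)}` be a fusion frame for `H` with `Σ_i v_i² = 1`, and let
`(Ψ_k)` be an i.i.d. sequence of random operators with `ℙ(Ψ_k = P_{W_i}) = v_i²`. With
`T_k = Ψ_k (I - Ψ_{k-1})⋯(I - Ψ₁)`, for every `x ∈ H`, almost surely
`x = lim_n Σ_{k=1}^n T_k x`. -/
theorem fusion_frame_almost_sure_expansion
    {Ω : Type*} [MeasureSpace Ω] [IsProbabilityMeasure (ℙ : Measure Ω)]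
    {H : Type*} [NormedAddCommGroup H] [InnerProductSpace ℂ H]
    [CompleteSpace H] [TopologicalSpace.SeparableSpace H]
    [MeasurableSpace H] [BorelSpace H]
    (W : ℕ → Submodule ℂ H) [∀ i, CompleteSpace (W i)]
    (v : ℕ → ℝ) (hv : ∀ i, 0 < v i)
    (A B : ℝ) (hA : 0 < A) (hB : 0 < B)
    (hsummable : ∀ x : H, Summable fun i => v i ^ 2 * ‖projL (W i) x‖ ^ 2)
    (hlow : ∀ x : H, A * ‖x‖ ^ 2 ≤ ∑' i, v i ^ 2 * ‖projL (W i) x‖ ^ 2)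
    (hup : ∀ x : H, ∑' i, v i ^ 2 * ‖projL (W i) x‖ ^ 2 ≤ B * ‖x‖ ^ 2)
    (hprob : ∑' i, v i ^ 2 = 1)
    (Ψ : ℕ → Ω → (H →L[ℂ] H))
    (hmeas : ∀ k, ∀ x : H, Measurable fun ω => Ψ k ω x)
    (hvalues : ∀ k ω, ∃ i, Ψ k ω = projL (W i))
    (hdist : ∀ k i, (ℙ : Measure Ω) {ω | Ψ k ω = projL (W i)} = ENNReal.ofReal (v i ^ 2))
    (hindep : iIndepFun (m := fun _ : ℕ => strongMS H) Ψ (ℙ : Measure Ω))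
    (hident : ∀ i j : ℕ,
      @IdentDistrib Ω Ω (H →L[ℂ] H) _ _ (strongMS H) (Ψ i) (Ψ j) ℙ ℙ)
    (x : H) :
    ∀ᵐ ω ∂(ℙ : Measure Ω),
      Tendsto (fun n => ∑ k ∈ Finset.Icc 1 n, Ψ k ω (residualProd Ψ ω (k - 1) x))
        atTop (nhds x) := by
  classical
  set μ : Measure Ω := ℙ with hμdef
  -- Replace `A` by `A' = min A 1 ∈ (0, 1]`.
  set A' : ℝ := min A 1 with hA'def
  have hA' : 0 < A' := lt_min hA one_pos
  have hA'low : ∀ z : H, A' * ‖z‖ ^ 2 ≤ ∑' i, v i ^ 2 * ‖projL (W i) z‖ ^ 2 := fun z =>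
    le_trans (mul_le_mul_of_nonneg_right (min_le_left A 1) (sq_nonneg _)) (hlow z)
  -- Abbreviation for the residual vectors.
  set y : ℕ → Ω → H := fun n ω => residualProd Ψ ω n x with hydef
  have hy0 : ∀ ω, y 0 ω = x := by
    intro ω
    simp [hydef, residualProd]
  have hstep : ∀ n ω, y (n + 1) ω = y n ω - Ψ (n + 1) ω (y n ω) := by
    intro n ω
    show residualProd Ψ ω (n + 1) x = _
    rw [show residualProd Ψ ω (n + 1) = (1 - Ψ (n + 1) ω) * residualProd Ψ ω n from rfl]
    simp [ContinuousLinearMap.mul_apply, ContinuousLinearMap.sub_apply,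
      ContinuousLinearMap.one_apply]
    rfl
  -- Telescoping sum.
  have htel : ∀ ω n, ∑ k ∈ Finset.Icc 1 n, Ψ k ω (residualProd Ψ ω (k - 1) x)
      = x - y n ω := by
    intro ω n
    induction n with
    | zero => simp [hy0 ω]
    | succ n ih =>
        rw [Finset.sum_Icc_succ_top (Nat.le_add_left 1 n), ih]
        have h1 : (n + 1) - 1 = n := rfl
        rw [h1, hstep n ω]
        show x - y n ω + Ψ (n + 1) ω (y n ω) = x - (y n ω - Ψ (n + 1) ω (y n ω))
        abel
  -- Pythagoras at each step.
  have hnorm : ∀ n ω, ‖y (n + 1) ω‖ ^ 2 + ‖Ψ (n + 1) ω (y n ω)‖ ^ 2 = ‖y n ω‖ ^ 2 := by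
    intro n ω
    obtain ⟨i, hi⟩ := hvalues (n + 1) ω
    rw [hstep n ω, hi]
    exact projL_norm_identity (W i) (y n ω)
  have hfdec : ∀ n ω, ‖y (n + 1) ω‖ ^ 2 ≤ ‖y n ω‖ ^ 2 := by
    intro n ω
    have := hnorm n ω
    nlinarith [sq_nonneg ‖Ψ (n + 1) ω (y n ω)‖]
  have hyb : ∀ n ω, ‖y n ω‖ ^ 2 ≤ ‖x‖ ^ 2 := by
    intro n
    induction n with
    | zero => intro ω; rw [hy0 ω]
    | succ n ih => intro ω; exact le_trans (hfdec n ω) (ih ω)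
  -- Index functions.
  set ι : ℕ → Ω → ℕ := fun k ω => Nat.find (hvalues k ω) with hιdef
  have hι : ∀ k ω, Ψ k ω = projL (W (ι k ω)) := fun k ω => Nat.find_spec (hvalues k ω)
  set S : ℕ → Set (H →L[ℂ] H) := fun i =>
    {projL (W i)} ∩ ⋂ j ∈ Set.Iio i, ({projL (W j)} : Set (H →L[ℂ] H))ᶜ with hSdef
  have hSmeas : ∀ i, MeasurableSet[strongMS H] (S i) := fun i =>
    (strongMS_measurableSet_singleton _).inter
      (MeasurableSet.biInter (Set.to_countable _) fun j _ =>
        (strongMS_measurableSet_singleton _).compl)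
  have hιpre : ∀ k i, ι k ⁻¹' {i} = Ψ k ⁻¹' (S i) := by
    intro k i
    ext ω
    simp only [Set.mem_preimage, Set.mem_singleton_iff, hSdef, Set.mem_inter_iff,
      Set.mem_iInter, Set.mem_compl_iff, Set.mem_Iio, hιdef,
      Nat.find_eq_iff (hvalues k ω)]
  have hιmeas : ∀ k, Measurable[(strongMS H).comap (Ψ k)] (ι k) := by
    intro k
    intro s _
    have hsu : ι k ⁻¹' s = ⋃ i ∈ s, ι k ⁻¹' {i} := by ext ω; simp
    rw [hsu]
    exact MeasurableSet.biUnion (Set.to_countable s) fun i _ =>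
      MeasurableSpace.measurableSet_comap.mpr ⟨S i, hSmeas i, (hιpre k i).symm⟩
  have hΨle : ∀ k, (strongMS H).comap (Ψ k) ≤ (inferInstance : MeasurableSpace Ω) := by
    intro k
    rw [strongMS, MeasurableSpace.comap_iSup]
    refine iSup_le fun z => ?_
    rw [MeasurableSpace.comap_comp]
    have h : Measurable (fun ω => Ψ k ω z) := hmeas k z
    rw [show ((fun T : H →L[ℂ] H => T z) ∘ Ψ k) = fun ω => Ψ k ω z from rfl,
      ← BorelSpace.measurable_eq (α := H)]
    exact measurable_iff_comap_le.mp h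
  -- The filtration.
  set M : ℕ → MeasurableSpace Ω := fun n => ⨆ k ∈ Set.Icc 1 n, (strongMS H).comap (Ψ k)
    with hMdef
  have hMle : ∀ n, M n ≤ (inferInstance : MeasurableSpace Ω) :=
    fun n => iSup₂_le fun k _ => hΨle k
  have hMmono : Monotone M := fun a b hab =>
    biSup_mono fun k hk => Set.Icc_subset_Icc_right hab hk
  have hcomapleM : ∀ k n, 1 ≤ k → k ≤ n → (strongMS H).comap (Ψ k) ≤ M n := by
    intro k n h1 h2
    rw [hMdef]
    exact le_biSup (fun j => (strongMS H).comap (Ψ j)) (Set.mem_Icc.mpr ⟨h1, h2⟩)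
  -- Measurability of the residuals.
  have hymeas : ∀ n, Measurable[M n] (y n) := by
    intro n
    induction n with
    | zero =>
        have : y 0 = fun _ => x := funext hy0
        rw [this]
        exact measurable_const
    | succ n ih =>
        have h1 : Measurable[M (n + 1)] (y n) := ih.mono (hMmono (Nat.le_succ n)) le_rfl
        have h2 : Measurable[M (n + 1)] (ι (n + 1)) :=
          (hιmeas (n + 1)).mono (hcomapleM (n + 1) (n + 1) (Nat.le_add_left 1 n) le_rfl) le_rfl
        have hφ : Measurable (fun p : H × ℕ => p.1 - projL (W p.2) p.1) := by
          apply measurable_from_prod_countable_left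
          intro i
          exact (continuous_id.sub (projL (W i)).continuous).measurable
        have heq : y (n + 1) = fun ω =>
            (fun p : H × ℕ => p.1 - projL (W p.2) p.1) (y n ω, ι (n + 1) ω) := by
          funext ω
          rw [hstep n ω, hι (n + 1) ω]
        rw [heq]
        exact hφ.comp (h1.prodMk h2)
  have hymeas' : ∀ n, Measurable (y n) := fun n => (hymeas n).mono (hMle n) le_rfl
  -- The squared norms as ENNReal-valued functions.
  set f : ℕ → Ω → ENNReal := fun n ω => ENNReal.ofReal (‖y n ω‖ ^ 2) with hfdef
  have hfmeasM : ∀ n, Measurable[M n] (f n) := fun n =>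
    ENNReal.measurable_ofReal.comp
      (((continuous_pow 2).measurable).comp (measurable_norm.comp (hymeas n)))
  have hfmeas : ∀ n, Measurable (f n) := fun n => (hfmeasM n).mono (hMle n) le_rfl
  set I : ℕ → ENNReal := fun n => ∫⁻ ω, f n ω ∂μ with hIdef
  have hIbd : ∀ n, I n ≤ ENNReal.ofReal (‖x‖ ^ 2) := by
    intro n
    calc I n ≤ ∫⁻ _, ENNReal.ofReal (‖x‖ ^ 2) ∂μ :=
          lintegral_mono fun ω => ENNReal.ofReal_le_ofReal (hyb n ω)
      _ = ENNReal.ofReal (‖x‖ ^ 2) := by simp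
  have hIne : ∀ n, I n ≠ ⊤ := fun n => (lt_of_le_of_lt (hIbd n) ENNReal.ofReal_lt_top).ne
  -- The distribution of the index function.
  have hvsum : Summable fun i => v i ^ 2 := by
    by_contra h
    rw [tsum_eq_zero_of_not_summable h] at hprob
    norm_num at hprob
  have hFmeas : ∀ k i, MeasurableSet (ι k ⁻¹' {i}) := fun k i =>
    hΨle k _ (MeasurableSpace.measurableSet_comap.mpr ⟨S i, hSmeas i, (hιpre k i).symm⟩)
  have hμF : ∀ k i, μ (ι k ⁻¹' {i}) = ENNReal.ofReal (v i ^ 2) := by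
    intro k
    have hle : ∀ i, μ (ι k ⁻¹' {i}) ≤ ENNReal.ofReal (v i ^ 2) := by
      intro i
      rw [← hdist k i]
      apply measure_mono
      intro ω hω
      simp only [Set.mem_preimage, Set.mem_singleton_iff] at hω
      show Ψ k ω = projL (W i)
      rw [hι k ω, hω]
    have hsum1 : ∑' i, μ (ι k ⁻¹' {i}) = 1 := by
      rw [← measure_iUnion (fun i j hij => (Set.disjoint_singleton.mpr hij).preimage (ι k))
        (fun i => hFmeas k i)]
      have : (⋃ i, ι k ⁻¹' {i}) = Set.univ := by
        ext ω; simp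
      rw [this, measure_univ]
    have hsum2 : ∑' i, ENNReal.ofReal (v i ^ 2) = 1 := by
      rw [← ENNReal.ofReal_tsum_of_nonneg (fun i => sq_nonneg _) hvsum, hprob,
        ENNReal.ofReal_one]
    intro i
    by_contra hne
    have hlt : μ (ι k ⁻¹' {i}) < ENNReal.ofReal (v i ^ 2) := lt_of_le_of_ne (hle i) hne
    have : (1 : ENNReal) < 1 := by
      calc (1 : ENNReal) = ∑' j, μ (ι k ⁻¹' {j}) := hsum1.symm
        _ < ∑' j, ENNReal.ofReal (v j ^ 2) :=
          ENNReal.tsum_lt_tsum (by rw [hsum1]; simp) hle hlt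
        _ = 1 := hsum2
    exact absurd this (lt_irrefl _)
  -- The contraction estimate.
  have hcontr : ∀ n, I (n + 1) ≤ (1 - ENNReal.ofReal A') * I n := by
    intro n
    -- σ-algebra independence
    have hdisj : Disjoint ({n + 1} : Set ℕ) (Set.Icc 1 n) := by
      rw [Set.disjoint_singleton_left]
      simp only [Set.mem_Icc, not_and]
      intro _
      omega
    have hIndep : Indep ((strongMS H).comap (Ψ (n + 1))) (M n) μ := by
      have h := indep_iSup_of_disjoint (m := fun k => (strongMS H).comap (Ψ k))
        hΨle hindep.iIndep hdisj
      simpa only [iSup_singleton] using h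
    -- the projected pieces
    set g : ℕ → Ω → ENNReal := fun i ω => ENNReal.ofReal (‖projL (W i) (y n ω)‖ ^ 2)
      with hgdef
    have hgmeasM : ∀ i, Measurable[M n] (g i) := fun i =>
      ENNReal.measurable_ofReal.comp (((continuous_pow 2).measurable).comp
        (measurable_norm.comp ((projL (W i)).continuous.measurable.comp (hymeas n))))
    have hgmeas : ∀ i, Measurable (g i) := fun i => (hgmeasM i).mono (hMle n) le_rfl
    set F : ℕ → Set Ω := fun i => ι (n + 1) ⁻¹' {i} with hFdef
    have hFmeasN : ∀ i, MeasurableSet[(strongMS H).comap (Ψ (n + 1))] (F i) :=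
      fun i => MeasurableSpace.measurableSet_comap.mpr ⟨S i, hSmeas i, (hιpre (n + 1) i).symm⟩
    have hFamb : ∀ i, MeasurableSet (F i) := fun i => hFmeas (n + 1) i
    -- the key quantity
    set h : Ω → ENNReal := fun ω => ENNReal.ofReal (‖Ψ (n + 1) ω (y n ω)‖ ^ 2) with hhdef
    -- pointwise decomposition of `h` over the partition `F i`
    have hpt : ∀ ω, h ω = ∑' i, (F i).indicator (g i) ω := by
      intro ω
      rw [tsum_eq_single (ι (n + 1) ω) ?_]
      · have hωmem : ω ∈ F (ι (n + 1) ω) := rfl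
        rw [Set.indicator_of_mem hωmem, hgdef, hhdef]
        simp only []
        rw [hι (n + 1) ω]
      · intro i hi
        apply Set.indicator_of_notMem
        simp only [hFdef, Set.mem_preimage, Set.mem_singleton_iff]
        exact fun hc => hi hc.symm
    -- lower bound for the integral of h
    have hJ : ENNReal.ofReal A' * I n ≤ ∫⁻ ω, h ω ∂μ := by
      have hdecomp : ∫⁻ ω, h ω ∂μ = ∑' i, ∫⁻ ω, (F i).indicator (g i) ω ∂μ := by
        rw [← lintegral_tsum fun i => ((hgmeas i).indicator (hFamb i)).aemeasurable]
        exact lintegral_congr hpt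
      have hterm : ∀ i, ∫⁻ ω, (F i).indicator (g i) ω ∂μ
          = ENNReal.ofReal (v i ^ 2) * ∫⁻ ω, g i ω ∂μ := by
        intro i
        have hptmul : ∀ ω, (F i).indicator (g i) ω = (F i).indicator 1 ω * g i ω := by
          intro ω
          by_cases hω : ω ∈ F i <;>
            simp [Set.indicator_of_mem, Set.indicator_of_notMem, hω]
        calc ∫⁻ ω, (F i).indicator (g i) ω ∂μ
            = ∫⁻ ω, (F i).indicator 1 ω * g i ω ∂μ := lintegral_congr hptmul
          _ = (∫⁻ ω, (F i).indicator 1 ω ∂μ) * ∫⁻ ω, g i ω ∂μ :=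
            lintegral_mul_eq_lintegral_mul_lintegral_of_independent_measurableSpace
              (hΨle (n + 1)) (hMle n) hIndep
              (measurable_indicator_one' (m := (strongMS H).comap (Ψ (n + 1))) (hFmeasN i)) (hgmeasM i)
          _ = ENNReal.ofReal (v i ^ 2) * ∫⁻ ω, g i ω ∂μ := by
            rw [lintegral_indicator_one (hFamb i)]
            have hth : μ (F i) = ENNReal.ofReal (v i ^ 2) := hμF (n + 1) i
            rw [hth]
      have hptlow : ∀ ω, ENNReal.ofReal A' * f n ω
          ≤ ∑' i, ENNReal.ofReal (v i ^ 2) * g i ω := by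
        intro ω
        have h1 : ∀ i, ENNReal.ofReal (v i ^ 2) * g i ω
            = ENNReal.ofReal (v i ^ 2 * ‖projL (W i) (y n ω)‖ ^ 2) := fun i =>
          (ENNReal.ofReal_mul (sq_nonneg _)).symm
        rw [tsum_congr h1,
          ← ENNReal.ofReal_tsum_of_nonneg (fun i => mul_nonneg (sq_nonneg _) (sq_nonneg _))
            (hsummable (y n ω)),
          hfdef, ← ENNReal.ofReal_mul hA'.le]
        exact ENNReal.ofReal_le_ofReal (hA'low (y n ω))
      calc ENNReal.ofReal A' * I n
          = ∫⁻ ω, ENNReal.ofReal A' * f n ω ∂μ := (lintegral_const_mul _ (hfmeas n)).symm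
        _ ≤ ∫⁻ ω, ∑' i, ENNReal.ofReal (v i ^ 2) * g i ω ∂μ := lintegral_mono hptlow
        _ = ∑' i, ∫⁻ ω, ENNReal.ofReal (v i ^ 2) * g i ω ∂μ :=
            lintegral_tsum fun i => ((hgmeas i).const_mul _).aemeasurable
        _ = ∑' i, ENNReal.ofReal (v i ^ 2) * ∫⁻ ω, g i ω ∂μ :=
            tsum_congr fun i => lintegral_const_mul _ (hgmeas i)
        _ = ∑' i, ∫⁻ ω, (F i).indicator (g i) ω ∂μ := (tsum_congr hterm).symm
        _ = ∫⁻ ω, h ω ∂μ := hdecomp.symm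
    -- additive decomposition of the integral
    have hadd : I (n + 1) + ∫⁻ ω, h ω ∂μ = I n := by
      have hptadd : ∀ ω, f (n + 1) ω + h ω = f n ω := by
        intro ω
        rw [hfdef, hhdef]
        simp only []
        rw [← ENNReal.ofReal_add (sq_nonneg _) (sq_nonneg _), hnorm n ω]
      calc I (n + 1) + ∫⁻ ω, h ω ∂μ = ∫⁻ ω, (f (n + 1) ω + h ω) ∂μ :=
            (lintegral_add_left (hfmeas (n + 1)) _).symm
        _ = ∫⁻ ω, f n ω ∂μ := lintegral_congr hptadd
        _ = I n := rfl
    have hhle : ∫⁻ ω, h ω ∂μ ≤ I n := by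
      rw [← hadd]; exact le_add_self
    have hhne : ∫⁻ ω, h ω ∂μ ≠ ⊤ := ne_top_of_le_ne_top (hIne n) hhle
    have heq1 : I (n + 1) = I n - ∫⁻ ω, h ω ∂μ := ENNReal.eq_sub_of_add_eq hhne hadd
    calc I (n + 1) = I n - ∫⁻ ω, h ω ∂μ := heq1
      _ ≤ I n - ENNReal.ofReal A' * I n := tsub_le_tsub_left hJ _
      _ ≤ (1 - ENNReal.ofReal A') * I n := by
          rw [tsub_le_iff_right]
          calc I n = 1 * I n := (one_mul _).symm
            _ ≤ ((1 - ENNReal.ofReal A') + ENNReal.ofReal A') * I n :=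
                mul_le_mul_left le_tsub_add _
            _ = (1 - ENNReal.ofReal A') * I n + ENNReal.ofReal A' * I n := add_mul _ _ _
  -- geometric decay
  have hIpow : ∀ n, I n ≤ (1 - ENNReal.ofReal A') ^ n * ENNReal.ofReal (‖x‖ ^ 2) := by
    intro n
    induction n with
    | zero => simpa using hIbd 0
    | succ n ih =>
        calc I (n + 1) ≤ (1 - ENNReal.ofReal A') * I n := hcontr n
          _ ≤ (1 - ENNReal.ofReal A') * ((1 - ENNReal.ofReal A') ^ n
              * ENNReal.ofReal (‖x‖ ^ 2)) := mul_le_mul_right ih _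
          _ = (1 - ENNReal.ofReal A') ^ (n + 1) * ENNReal.ofReal (‖x‖ ^ 2) := by ring
  have hc1 : (1 - ENNReal.ofReal A') < 1 :=
    ENNReal.sub_lt_self (by simp) (by simp) (ENNReal.ofReal_pos.mpr hA').ne'
  have hlim : Tendsto (fun n => (1 - ENNReal.ofReal A') ^ n * ENNReal.ofReal (‖x‖ ^ 2))
      atTop (nhds 0) := by
    have := ENNReal.Tendsto.mul_const (b := ENNReal.ofReal (‖x‖ ^ 2))
      (ENNReal.tendsto_pow_atTop_nhds_zero_of_lt_one hc1)
      (Or.inr ENNReal.ofReal_ne_top)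
    simpa using this
  -- the infimum is a.e. zero
  set G : Ω → ENNReal := fun ω => ⨅ n, f n ω with hGdef
  have hGmeas : Measurable G := Measurable.iInf hfmeas
  have hGint : ∫⁻ ω, G ω ∂μ = 0 := by
    have hle : ∀ n, ∫⁻ ω, G ω ∂μ ≤ (1 - ENNReal.ofReal A') ^ n * ENNReal.ofReal (‖x‖ ^ 2) :=
      fun n => le_trans (lintegral_mono fun ω => iInf_le _ n) (hIpow n)
    exact le_antisymm (ge_of_tendsto' hlim hle) (by simp)
  have hG0 : ∀ᵐ ω ∂μ, G ω = 0 := (lintegral_eq_zero_iff hGmeas).mp hGint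
  -- conclusion
  filter_upwards [hG0] with ω hω
  have hanti : Antitone fun n => f n ω :=
    antitone_nat_of_succ_le fun n => ENNReal.ofReal_le_ofReal (hfdec n ω)
  have h1 : Tendsto (fun n => f n ω) atTop (nhds 0) := by
    have ht := tendsto_atTop_iInf hanti
    rwa [show (⨅ n, f n ω) = 0 from hω] at ht
  have h2 : Tendsto (fun n => ‖y n ω‖ ^ 2) atTop (nhds 0) := by
    have ht := (ENNReal.tendsto_toReal (a := 0) (by simp)).comp h1
    have he : ∀ n, (f n ω).toReal = ‖y n ω‖ ^ 2 := fun n => ENNReal.toReal_ofReal (sq_nonneg _)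
    simpa [Function.comp_def, he] using ht
  have h3 : Tendsto (fun n => ‖y n ω‖) atTop (nhds 0) := by
    have hs := (Real.continuous_sqrt.tendsto 0).comp h2
    have he : ∀ n, Real.sqrt (‖y n ω‖ ^ 2) = ‖y n ω‖ := fun n => Real.sqrt_sq (norm_nonneg _)
    simpa [Function.comp_def, he] using hs
  have h4 : Tendsto (fun n => y n ω) atTop (nhds 0) :=
    tendsto_zero_iff_norm_tendsto_zero.mpr h3
  have h5 : Tendsto (fun n => x - y n ω) atTop (nhds x) := by
    simpa using tendsto_const_nhds.sub h4
  have hfun : (fun n => ∑ k ∈ Finset.Icc 1 n, Ψ k ω (residualProd Ψ ω (k - 1) x))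
      = fun n => x - y n ω := funext fun n => htel ω n
  rw [hfun]
  exact h5
end
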